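/- arXiv:1203.2603 — 5 statements merged into one kernel-verified Lean document; each statement's English description precedes it below -/
import Mathlib

section
/- Let T be a subdivision of the claw K_{1,3} (a star with three legs subdivided into paths of arbitrary positive lengths). Then a graph G contains T as a minor if and only if G contains T as a subgraph. -/
/-- `T` is contained in `G` as a subgraph. -/
def ContainsSubgraph {α β : Type*} (T : SimpleGraph α) (G : SimpleGraph β) : Prop :=
  ∃ f : α → β, Function.Injective f ∧ ∀ u v, T.Adj u v → G.Adj (f u) (f v)

/-- `T` is a minor of `G` (branch-set characterization). -/
def IsMinor {α β : Type*} (T : SimpleGraph α) (G : SimpleGraph β) : Prop :=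
  ∃ B : α → Set β,
    (∀ x, (B x).Nonempty) ∧
    (Pairwise fun x y => Disjoint (B x) (B y)) ∧
    (∀ x, (G.induce (B x)).Connected) ∧
    ∀ u v, T.Adj u v → ∃ a ∈ B u, ∃ b ∈ B v, G.Adj a b

/-- The star with `d` legs of lengths `ℓ 0, …, ℓ (d-1)`: a central vertex `none` with
`d` internally disjoint paths attached; `some ⟨j, i⟩` is the vertex at depth `i+1`
along the `j`-th leg. -/
def SubdividedStar (d : ℕ) (ℓ : Fin d → ℕ) :
    SimpleGraph (Option (Σ j : Fin d, Fin (ℓ j))) :=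
  SimpleGraph.fromRel (fun x y =>
    match x, y with
    | none, some ⟨_, i⟩ => i.val = 0
    | some ⟨j, i⟩, some ⟨j', i'⟩ => j.val = j'.val ∧ i'.val = i.val + 1
    | _, _ => False)

open SimpleGraph Walk

section Aux

set_option linter.unusedSectionVars false

lemma star_adj_none {d : ℕ} {ℓ : Fin d → ℕ} (j : Fin d) (i : Fin (ℓ j)) (h : i.val = 0) :
    (SubdividedStar d ℓ).Adj none (some ⟨j, i⟩) := by
  rw [SubdividedStar, SimpleGraph.fromRel_adj]
  exact ⟨by simp, Or.inl h⟩

lemma star_adj_step {d : ℕ} {ℓ : Fin d → ℕ} (j : Fin d) (i i' : Fin (ℓ j))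
    (h : i'.val = i.val + 1) :
    (SubdividedStar d ℓ).Adj (some ⟨j, i⟩) (some ⟨j, i'⟩) := by
  rw [SubdividedStar, SimpleGraph.fromRel_adj]
  refine ⟨?_, Or.inl ⟨rfl, h⟩⟩
  simp only [ne_eq, Option.some.injEq]
  intro he
  have : i = i' := eq_of_heq (Sigma.mk.inj_iff.mp he).2
  omega

lemma star_adj_elim {d : ℕ} {ℓ : Fin d → ℕ} {u v : Option (Σ j : Fin d, Fin (ℓ j))}
    (h : (SubdividedStar d ℓ).Adj u v) :
    (∃ j : Fin d, ∃ i : Fin (ℓ j), i.val = 0 ∧ u = none ∧ v = some ⟨j, i⟩) ∨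
    (∃ j : Fin d, ∃ i : Fin (ℓ j), i.val = 0 ∧ v = none ∧ u = some ⟨j, i⟩) ∨
    (∃ j : Fin d, ∃ i i' : Fin (ℓ j), i'.val = i.val + 1 ∧ u = some ⟨j, i⟩ ∧ v = some ⟨j, i'⟩) ∨
    (∃ j : Fin d, ∃ i i' : Fin (ℓ j), i'.val = i.val + 1 ∧ v = some ⟨j, i⟩ ∧ u = some ⟨j, i'⟩) := by
  rw [SubdividedStar, SimpleGraph.fromRel_adj] at h
  obtain ⟨hne, h | h⟩ := h
  · match u, v with
    | none, none => exact absurd rfl hne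
    | none, some ⟨j, i⟩ => exact Or.inl ⟨j, i, h, rfl, rfl⟩
    | some ⟨j, i⟩, none => exact absurd h (by simp)
    | some ⟨j, i⟩, some ⟨j', i'⟩ =>
      obtain ⟨hj, hi⟩ := h
      have hjj : j = j' := Fin.ext hj
      subst hjj
      exact Or.inr (Or.inr (Or.inl ⟨j, i, i', hi, rfl, rfl⟩))
  · match u, v with
    | none, none => exact absurd rfl hne
    | some ⟨j, i⟩, none => exact Or.inr (Or.inl ⟨j, i, h, rfl, rfl⟩)
    | none, some ⟨j, i⟩ => exact absurd h (by simp)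
    | some ⟨j, i⟩, some ⟨j', i'⟩ =>
      obtain ⟨hj, hi⟩ := h
      have hjj : j' = j := Fin.ext hj
      subst hjj
      exact Or.inr (Or.inr (Or.inr ⟨j', i', i, hi, rfl, rfl⟩))

variable {V : Type*} [DecidableEq V] {G : SimpleGraph V}

lemma psi_len (ψ : V → ℕ) : ∀ {u v : V} (W : G.Walk u v),
    (∀ x y, s(x,y) ∈ W.edges → ψ y ≤ ψ x + 1) → ψ v ≤ ψ u + W.length := by
  intro u v W
  induction W with
  | nil => simp
  | @cons u m v h p ih =>
    intro hE
    have h1 : ψ m ≤ ψ u + 1 := hE u m (by simp)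
    have h2 : ψ v ≤ ψ m + p.length := ih (fun x y hxy => hE x y (by simp [hxy]))
    simp only [Walk.length_cons]
    omega

lemma first_hit (L : List V) : ∀ {a b : V} (_ : G.Walk a b), b ∈ L →
    ∃ c, c ∈ L ∧ ∃ R : G.Walk a c, R.IsPath ∧ ∀ x ∈ R.support, x ≠ c → x ∉ L := by
  intro a b Q
  induction Q with
  | nil =>
    intro hb
    exact ⟨_, hb, Walk.nil, Walk.IsPath.nil, by simp⟩
  | @cons u m v h p ih =>
    intro hb
    by_cases hu : u ∈ L
    · exact ⟨u, hu, Walk.nil, Walk.IsPath.nil, by simp⟩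
    · obtain ⟨c, hc, R, _, hRL⟩ := ih hb
      refine ⟨c, hc, ((Walk.cons h R).toPath : G.Walk u c), ((Walk.cons h R).toPath).2, ?_⟩
      intro x hx hxc
      have hx' : x ∈ (Walk.cons h R).support := Walk.support_toPath_subset _ hx
      rw [Walk.support_cons] at hx'
      rcases List.mem_cons.mp hx' with rfl | hx''
      · exact hu
      · exact hRL x hx'' hxc

lemma claw_aux {s : Set V} (hconn : (G.induce s).Connected) (a₀ a₁ a₂ : V)
    (h₀ : a₀ ∈ s) (h₁ : a₁ ∈ s) (h₂ : a₂ ∈ s) :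
    ∃ c, c ∈ s ∧ ∃ (P₀ : G.Walk c a₀) (P₁ : G.Walk c a₁) (P₂ : G.Walk c a₂),
      P₀.IsPath ∧ P₁.IsPath ∧ P₂.IsPath ∧
      (∀ x ∈ P₀.support, x ∈ s) ∧ (∀ x ∈ P₁.support, x ∈ s) ∧ (∀ x ∈ P₂.support, x ∈ s) ∧
      (∀ x, x ∈ P₀.support → x ∈ P₁.support → x = c) ∧
      (∀ x, x ∈ P₀.support → x ∈ P₂.support → x = c) ∧
      (∀ x, x ∈ P₁.support → x ∈ P₂.support → x = c) := by
  classical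
  set H := G.induce s with hH
  let emb : H ↪g G := SimpleGraph.Embedding.induce s
  set A₀ : s := ⟨a₀, h₀⟩
  set A₁ : s := ⟨a₁, h₁⟩
  set A₂ : s := ⟨a₂, h₂⟩
  obtain ⟨P⟩ := hconn.preconnected A₀ A₁
  have hP0p : (P.toPath : H.Walk A₀ A₁).IsPath := P.toPath.2
  set P0 : H.Walk A₀ A₁ := (P.toPath : H.Walk A₀ A₁) with hP0
  obtain ⟨Q⟩ := hconn.preconnected A₂ A₀
  obtain ⟨c', hc', R, hRp, hRL⟩ := first_hit P0.support Q (Walk.start_mem_support P0)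
  set P1 : H.Walk A₀ c' := P0.takeUntil c' hc' with hP1
  set P2 : H.Walk c' A₁ := P0.dropUntil c' hc' with hP2
  have hspec : P1.append P2 = P0 := Walk.take_spec P0 hc'
  have hsupp : P0.support = P1.support ++ P2.support.tail := by
    rw [← hspec, Walk.support_append]
  have hnd : P0.support.Nodup := hP0p.support_nodup
  have hdisj : ∀ x, x ∈ P1.support → x ∈ P2.support.tail → False := by
    rw [hsupp] at hnd
    intro x hx1 hx2
    exact (List.disjoint_of_nodup_append hnd) hx1 hx2
  have hP1sub : ∀ x, x ∈ P1.support → x ∈ P0.support :=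
    fun x hx => Walk.support_takeUntil_subset P0 hc' hx
  have hP2sub : ∀ x, x ∈ P2.support → x ∈ P0.support :=
    fun x hx => Walk.support_dropUntil_subset P0 hc' hx
  have d12 : ∀ x, x ∈ P1.support → x ∈ P2.support → x = c' := by
    intro x hx1 hx2
    rw [Walk.support_eq_cons P2] at hx2
    rcases List.mem_cons.mp hx2 with rfl | hx2'
    · rfl
    · exact absurd (hdisj x hx1 hx2') (fun h => h)
  have dR : ∀ x, x ∈ R.support → x ∈ P0.support → x = c' := by
    intro x hxR hx0
    by_contra hne
    exact hRL x hxR hne hx0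
  have hP1path : P1.IsPath := hP0p.takeUntil hc'
  have hP2path : P2.IsPath := hP0p.dropUntil hc'
  have hinj : Function.Injective (emb.toHom : H →g G) := fun x y hxy =>
    Subtype.val_injective hxy
  refine ⟨(c' : V), c'.2, (P1.reverse.map emb.toHom), (P2.map emb.toHom),
    (R.reverse.map emb.toHom),
    Walk.map_isPath_of_injective hinj (hP1path.reverse),
    Walk.map_isPath_of_injective hinj hP2path,
    Walk.map_isPath_of_injective hinj (hRp.reverse), ?_, ?_, ?_, ?_, ?_, ?_⟩
  · intro x hx
    erw [Walk.support_map] at hx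
    obtain ⟨y, _, rfl⟩ := List.mem_map.mp hx
    exact y.2
  · intro x hx
    erw [Walk.support_map] at hx
    obtain ⟨y, _, rfl⟩ := List.mem_map.mp hx
    exact y.2
  · intro x hx
    erw [Walk.support_map] at hx
    obtain ⟨y, _, rfl⟩ := List.mem_map.mp hx
    exact y.2
  · intro x hx hy
    erw [Walk.support_map] at hx hy
    obtain ⟨y, hy1, rfl⟩ := List.mem_map.mp hx
    obtain ⟨y', hy2, he⟩ := List.mem_map.mp hy
    have : y' = y := Subtype.val_injective he
    subst this
    have := d12 y' (by simpa [Walk.support_reverse] using hy1) hy2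
    rw [this]; rfl
  · intro x hx hy
    erw [Walk.support_map] at hx hy
    obtain ⟨y, hy1, rfl⟩ := List.mem_map.mp hx
    obtain ⟨y', hy2, he⟩ := List.mem_map.mp hy
    have : y' = y := Subtype.val_injective he
    subst this
    have := dR y' (by simpa [Walk.support_reverse] using hy2)
      (hP1sub y' (by simpa [Walk.support_reverse] using hy1))
    rw [this]; rfl
  · intro x hx hy
    erw [Walk.support_map] at hx hy
    obtain ⟨y, hy1, rfl⟩ := List.mem_map.mp hx
    obtain ⟨y', hy2, he⟩ := List.mem_map.mp hy
    have : y' = y := Subtype.val_injective he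
    subst this
    have := dR y' (by simpa [Walk.support_reverse] using hy2) (hP2sub y' hy1)
    rw [this]; rfl

end Aux

lemma leg_exists {β : Type*} {G : SimpleGraph β} {ℓ : Fin 3 → ℕ}
    (B : Option (Σ j : Fin 3, Fin (ℓ j)) → Set β)
    (hdisj : Pairwise fun x y => Disjoint (B x) (B y))
    (hconn : ∀ x, (G.induce (B x)).Connected)
    (hedge : ∀ u v, (SubdividedStar 3 ℓ).Adj u v → ∃ a ∈ B u, ∃ b ∈ B v, G.Adj a b)
    (j : Fin 3) (hj : 1 ≤ ℓ j)
    {c aj : β} (P : G.Walk c aj) (hP : P.IsPath) (hPs : ∀ x ∈ P.support, x ∈ B none)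
    {bj : β} (hbj : bj ∈ B (some ⟨j, ⟨0, hj⟩⟩)) (hab : G.Adj aj bj) :
    ∃ L : List β, L.length = ℓ j ∧ (c :: L).Nodup ∧ List.Chain' G.Adj (c :: L) ∧
      ∀ x ∈ L, (x ∈ P.support ∧ x ≠ c) ∨ ∃ i : Fin (ℓ j), x ∈ B (some ⟨j, i⟩) := by
  classical
  set ψ : β → ℕ := fun v =>
    if h : ∃ i : Fin (ℓ j), v ∈ B (some ⟨j, i⟩) then (Classical.choose h).val + 1 else 0 with hψdef
  have psi_some : ∀ (i : Fin (ℓ j)) (v : β), v ∈ B (some ⟨j, i⟩) → ψ v = i.val + 1 := by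
    intro i v hv
    have hex : ∃ i : Fin (ℓ j), v ∈ B (some ⟨j, i⟩) := ⟨i, hv⟩
    rw [hψdef]
    simp only [dif_pos hex]
    have hspec := Classical.choose_spec hex
    have : Classical.choose hex = i := by
      by_contra hne
      have hne' : (some ⟨j, Classical.choose hex⟩ : Option (Σ j : Fin 3, Fin (ℓ j))) ≠
          some ⟨j, i⟩ := by
        simp only [ne_eq, Option.some.injEq]
        intro he
        exact hne (eq_of_heq (Sigma.mk.inj_iff.mp he).2)
      exact Set.disjoint_left.mp (hdisj hne') hspec hv
    rw [this]
  have psi_none : ∀ v : β, v ∈ B none → ψ v = 0 := by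
    intro v hv
    rw [hψdef]
    have : ¬ ∃ i : Fin (ℓ j), v ∈ B (some ⟨j, i⟩) := by
      rintro ⟨i, hi⟩
      exact Set.disjoint_left.mp
        (hdisj (Option.some_ne_none (⟨j, i⟩ : Σ j : Fin 3, Fin (ℓ j))).symm) hv hi
    simp only [dif_neg this]
  have haj : aj ∈ B none := hPs aj (Walk.end_mem_support P)
  have hc : c ∈ B none := hPs c (Walk.start_mem_support P)
  have key : ∀ m : ℕ, ∀ hm : m < ℓ j, ∃ z, z ∈ B (some ⟨j, ⟨m, hm⟩⟩) ∧ ∃ W : G.Walk aj z,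
      (∀ x ∈ W.support, x = aj ∨ ∃ i : Fin (ℓ j), x ∈ B (some ⟨j, i⟩)) ∧
      (∀ x y, s(x,y) ∈ W.edges → ψ y ≤ ψ x + 1) := by
    intro m
    induction m with
    | zero =>
      intro hm
      refine ⟨bj, hbj, Walk.cons hab Walk.nil, ?_, ?_⟩
      · intro x hx
        simp only [Walk.support_cons, Walk.support_nil, List.mem_cons, List.mem_singleton] at hx
        rcases hx with rfl | rfl | h
        · exact Or.inl rfl
        · exact Or.inr ⟨⟨0, hj⟩, hbj⟩
        · exact absurd h List.not_mem_nil
      · intro x y hxy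
        simp only [Walk.edges_cons, Walk.edges_nil, List.mem_singleton] at hxy
        rcases Sym2.eq_iff.mp hxy with ⟨hx1, hy1⟩ | ⟨hx1, hy1⟩
        · rw [hx1, hy1, psi_none aj haj, psi_some ⟨0, hj⟩ bj hbj]
        · rw [hx1, hy1, psi_none aj haj, psi_some ⟨0, hj⟩ bj hbj]
          simp
    | succ m ih =>
      intro hm
      have hm' : m < ℓ j := Nat.lt_of_succ_lt hm
      obtain ⟨z, hz, W, hWs, hWe⟩ := ih hm'
      obtain ⟨x, hx, y, hy, hxy⟩ := hedge (some ⟨j, ⟨m, hm'⟩⟩) (some ⟨j, ⟨m + 1, hm⟩⟩)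
        (star_adj_step j ⟨m, hm'⟩ ⟨m + 1, hm⟩ rfl)
      obtain ⟨W2'⟩ := (hconn (some ⟨j, ⟨m, hm'⟩⟩)).preconnected ⟨z, hz⟩ ⟨x, hx⟩
      let W2 : G.Walk z x := W2'.map (SimpleGraph.Embedding.induce (B (some ⟨j, ⟨m, hm'⟩⟩))).toHom
      have hW2s : ∀ t ∈ W2.support, t ∈ B (some ⟨j, ⟨m, hm'⟩⟩) := by
        intro t ht
        erw [Walk.support_map] at ht
        obtain ⟨y', _, rfl⟩ := List.mem_map.mp ht
        exact y'.2
      refine ⟨y, hy, (W.append W2).append (Walk.cons hxy Walk.nil), ?_, ?_⟩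
      · intro t ht
        rw [Walk.mem_support_append_iff, Walk.mem_support_append_iff] at ht
        rcases ht with (ht | ht) | ht
        · exact hWs t ht
        · exact Or.inr ⟨⟨m, hm'⟩, hW2s t ht⟩
        · simp only [Walk.support_cons, Walk.support_nil, List.mem_cons, List.mem_singleton] at ht
          rcases ht with rfl | rfl | h
          · exact Or.inr ⟨⟨m, hm'⟩, hx⟩
          · exact Or.inr ⟨⟨m + 1, hm⟩, hy⟩
          · exact absurd h List.not_mem_nil
      · intro p q hpq
        rw [Walk.edges_append, List.mem_append, Walk.edges_append, List.mem_append] at hpq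
        rcases hpq with (hpq | hpq) | hpq
        · exact hWe p q hpq
        · have hp := hW2s p (Walk.fst_mem_support_of_mem_edges W2 hpq)
          have hq := hW2s q (Walk.snd_mem_support_of_mem_edges W2 hpq)
          rw [psi_some _ p hp, psi_some _ q hq]
          simp
        · simp only [Walk.edges_cons, Walk.edges_nil, List.mem_singleton] at hpq
          rcases Sym2.eq_iff.mp hpq with ⟨hp1, hq1⟩ | ⟨hp1, hq1⟩
          · rw [hp1, hq1, psi_some _ x hx, psi_some _ y hy]
          · rw [hp1, hq1, psi_some _ x hx, psi_some _ y hy]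
            simp
  obtain ⟨z, hz, W, hWs, hWe⟩ := key (ℓ j - 1) (by omega)
  set F : G.Walk c z := ((P.append W).toPath : G.Walk c z) with hF
  have hFp : F.IsPath := (P.append W).toPath.2
  have hFs : ∀ x ∈ F.support, x ∈ P.support ∨ ∃ i : Fin (ℓ j), x ∈ B (some ⟨j, i⟩) := by
    intro x hx
    have := Walk.support_toPath_subset (P.append W) hx
    rw [Walk.mem_support_append_iff] at this
    rcases this with h | h
    · exact Or.inl h
    · rcases hWs x h with rfl | h'
      · exact Or.inl (Walk.end_mem_support P)
      · exact Or.inr h'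
  have hFe : ∀ x y, s(x,y) ∈ F.edges → ψ y ≤ ψ x + 1 := by
    intro x y hxy
    have := Walk.edges_toPath_subset (P.append W) hxy
    rw [Walk.edges_append, List.mem_append] at this
    rcases this with h | h
    · have hp := hPs x (Walk.fst_mem_support_of_mem_edges P h)
      have hq := hPs y (Walk.snd_mem_support_of_mem_edges P h)
      rw [psi_none x hp, psi_none y hq]
      omega
    · exact hWe x y h
  have hlen : ℓ j ≤ F.length := by
    have := psi_len ψ F hFe
    rw [psi_none c hc] at this
    have hz' : ψ z = (ℓ j - 1) + 1 := psi_some _ z hz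
    omega
  refine ⟨F.support.tail.take (ℓ j), ?_, ?_, ?_, ?_⟩
  · rw [List.length_take]
    have : F.support.tail.length = F.length := by
      have := Walk.length_support F
      have h2 : F.support = c :: F.support.tail := Walk.support_eq_cons F
      rw [h2] at this
      simpa using this
    omega
  · have hsub : List.Sublist (c :: F.support.tail.take (ℓ j)) F.support := by
      rw [Walk.support_eq_cons F]
      exact List.Sublist.cons₂ c (List.take_sublist _ _)
    exact List.Nodup.sublist hsub hFp.support_nodup
  · have hch : List.Chain' G.Adj F.support := Walk.isChain_adj_support F
    have heq : (c :: F.support.tail.take (ℓ j)) = (c :: F.support.tail).take (ℓ j + 1) := rfl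
    rw [heq, ← Walk.support_eq_cons F]
    exact List.IsChain.take hch _
  · intro x hx
    have hxt : x ∈ F.support.tail := List.mem_of_mem_take hx
    have hxs : x ∈ F.support := by
      rw [Walk.support_eq_cons F]; exact List.mem_cons_of_mem c hxt
    have hxc : x ≠ c := by
      intro h
      subst h
      have := hFp.support_nodup
      rw [Walk.support_eq_cons F] at this
      exact (List.nodup_cons.mp this).1 hxt
    rcases hFs x hxs with h | h
    · exact Or.inl ⟨h, hxc⟩
    · exact Or.inr h

/-- For `T` a subdivision of the claw `K_{1,3}` (three legs of arbitrary
positive lengths), a graph `G` contains `T` as a minor iff it contains `T` as a subgraph. -/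
theorem stmt_4 {β : Type*} [Fintype β] (G : SimpleGraph β) (ℓ : Fin 3 → ℕ)
    (hℓ : ∀ j, 1 ≤ ℓ j) :
    IsMinor (SubdividedStar 3 ℓ) G ↔ ContainsSubgraph (SubdividedStar 3 ℓ) G := by
  classical
  constructor
  · rintro ⟨B, hne, hdisj, hconn, hedge⟩
    have habj : ∀ j : Fin 3, ∃ a ∈ B none, ∃ b ∈ B (some ⟨j, ⟨0, hℓ j⟩⟩), G.Adj a b :=
      fun j => hedge none (some ⟨j, ⟨0, hℓ j⟩⟩) (star_adj_none j ⟨0, hℓ j⟩ rfl)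
    choose a ha b hb hab using habj
    obtain ⟨c, hcB, P₀, P₁, P₂, hp₀, hp₁, hp₂, hs₀, hs₁, hs₂, d01, d02, d12⟩ :=
      claw_aux (hconn none) (a 0) (a 1) (a 2) (ha 0) (ha 1) (ha 2)
    obtain ⟨L₀, len₀, nd₀, ch₀, loc₀⟩ :=
      leg_exists B hdisj hconn hedge 0 (hℓ 0) P₀ hp₀ hs₀ (hb 0) (hab 0)
    obtain ⟨L₁, len₁, nd₁, ch₁, loc₁⟩ :=
      leg_exists B hdisj hconn hedge 1 (hℓ 1) P₁ hp₁ hs₁ (hb 1) (hab 1)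
    obtain ⟨L₂, len₂, nd₂, ch₂, loc₂⟩ :=
      leg_exists B hdisj hconn hedge 2 (hℓ 2) P₂ hp₂ hs₂ (hb 2) (hab 2)
    have hU : ∀ (p q : Fin 3), p ≠ q → ∀ x : β, (∃ i : Fin (ℓ p), x ∈ B (some ⟨p, i⟩)) →
        (∃ i : Fin (ℓ q), x ∈ B (some ⟨q, i⟩)) → False := by
      rintro p q hpq x ⟨i, hi⟩ ⟨i', hi'⟩
      have hne : (some ⟨p, i⟩ : Option (Σ j : Fin 3, Fin (ℓ j))) ≠ some ⟨q, i'⟩ := by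
        simp only [ne_eq, Option.some.injEq]
        intro h
        exact hpq (Sigma.mk.inj_iff.mp h).1
      exact Set.disjoint_left.mp (hdisj hne) hi hi'
    have hBU : ∀ (q : Fin 3) (x : β), x ∈ B none →
        (∃ i : Fin (ℓ q), x ∈ B (some ⟨q, i⟩)) → False := by
      rintro q x hx ⟨i, hi⟩
      exact Set.disjoint_left.mp
        (hdisj (Option.some_ne_none (⟨q, i⟩ : Σ j : Fin 3, Fin (ℓ j))).symm) hx hi
    have D01 : ∀ x, x ∈ L₀ → x ∈ L₁ → False := by
      intro x h0 h1
      rcases loc₀ x h0 with ⟨hxP, hxc⟩ | hxU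
      · rcases loc₁ x h1 with ⟨hxP', _⟩ | hxU'
        · exact hxc (d01 x hxP hxP')
        · exact hBU 1 x (hs₀ x hxP) hxU'
      · rcases loc₁ x h1 with ⟨hxP', _⟩ | hxU'
        · exact hBU 0 x (hs₁ x hxP') hxU
        · exact hU 0 1 (by decide) x hxU hxU'
    have D02 : ∀ x, x ∈ L₀ → x ∈ L₂ → False := by
      intro x h0 h1
      rcases loc₀ x h0 with ⟨hxP, hxc⟩ | hxU
      · rcases loc₂ x h1 with ⟨hxP', _⟩ | hxU'
        · exact hxc (d02 x hxP hxP')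
        · exact hBU 2 x (hs₀ x hxP) hxU'
      · rcases loc₂ x h1 with ⟨hxP', _⟩ | hxU'
        · exact hBU 0 x (hs₂ x hxP') hxU
        · exact hU 0 2 (by decide) x hxU hxU'
    have D12 : ∀ x, x ∈ L₁ → x ∈ L₂ → False := by
      intro x h0 h1
      rcases loc₁ x h0 with ⟨hxP, hxc⟩ | hxU
      · rcases loc₂ x h1 with ⟨hxP', _⟩ | hxU'
        · exact hxc (d12 x hxP hxP')
        · exact hBU 2 x (hs₁ x hxP) hxU'
      · rcases loc₂ x h1 with ⟨hxP', _⟩ | hxU'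
        · exact hBU 1 x (hs₂ x hxP') hxU
        · exact hU 1 2 (by decide) x hxU hxU'
    let 𝓛 : Fin 3 → List β := ![L₀, L₁, L₂]
    have hlen : ∀ j : Fin 3, (𝓛 j).length = ℓ j := by
      intro j
      fin_cases j
      · exact len₀
      · exact len₁
      · exact len₂
    have hnd : ∀ j : Fin 3, (c :: 𝓛 j).Nodup := by
      intro j; fin_cases j
      · exact nd₀
      · exact nd₁
      · exact nd₂
    have hch : ∀ j : Fin 3, List.Chain' G.Adj (c :: 𝓛 j) := by
      intro j; fin_cases j
      · exact ch₀
      · exact ch₁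
      · exact ch₂
    have hcnot : ∀ j : Fin 3, c ∉ 𝓛 j := fun j => (List.nodup_cons.mp (hnd j)).1
    have hndL : ∀ j : Fin 3, (𝓛 j).Nodup := fun j => (List.nodup_cons.mp (hnd j)).2
    have hdisL : ∀ p q : Fin 3, p ≠ q → ∀ x, x ∈ 𝓛 p → x ∈ 𝓛 q → False := by
      intro p q hpq x hp hq
      fin_cases p <;> fin_cases q <;>
        first
          | exact hpq rfl
          | exact D01 x hp hq
          | exact D01 x hq hp
          | exact D02 x hp hq
          | exact D02 x hq hp
          | exact D12 x hp hq
          | exact D12 x hq hp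
    have hA1 : ∀ (j : Fin 3) (hk : 0 < (𝓛 j).length), G.Adj c ((𝓛 j).get ⟨0, hk⟩) := by
      intro j hk
      have := List.isChain_iff_getElem.mp (hch j) 0 (by simp [List.length_cons]; omega)
      exact this
    have hA2 : ∀ (j : Fin 3) (k : ℕ) (hk : k + 1 < (𝓛 j).length),
        G.Adj ((𝓛 j).get ⟨k, by omega⟩) ((𝓛 j).get ⟨k + 1, hk⟩) := by
      intro j k hk
      have := List.isChain_iff_getElem.mp (hch j) (k + 1) (by simp [List.length_cons]; omega)
      exact this
    refine ⟨fun o => match o with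
      | none => c
      | some ⟨jj, ii⟩ => (𝓛 jj).get ⟨ii.val, by rw [hlen jj]; exact ii.isLt⟩, ?_, ?_⟩
    · rintro (_ | ⟨jx, ix⟩) (_ | ⟨jy, iy⟩) hxy
      · rfl
      · exfalso
        dsimp only at hxy
        have hm : (𝓛 jy).get ⟨iy.val, by rw [hlen jy]; exact iy.isLt⟩ ∈ 𝓛 jy :=
          List.get_mem _ _
        rw [← hxy] at hm
        exact hcnot jy hm
      · exfalso
        dsimp only at hxy
        have hm : (𝓛 jx).get ⟨ix.val, by rw [hlen jx]; exact ix.isLt⟩ ∈ 𝓛 jx :=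
          List.get_mem _ _
        rw [hxy] at hm
        exact hcnot jx hm
      · dsimp only at hxy
        by_cases hj : jx = jy
        · subst hj
          have := (List.Nodup.get_inj_iff (hndL jx)).mp hxy
          have hii : ix = iy := by
            apply Fin.ext
            exact Fin.mk.inj_iff.mp this
          rw [hii]
        · exfalso
          have hm1 : (𝓛 jx).get ⟨ix.val, by rw [hlen jx]; exact ix.isLt⟩ ∈ 𝓛 jx :=
            List.get_mem _ _
          have hm2 : (𝓛 jy).get ⟨iy.val, by rw [hlen jy]; exact iy.isLt⟩ ∈ 𝓛 jy :=
            List.get_mem _ _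
          rw [hxy] at hm1
          exact hdisL jx jy hj _ hm1 hm2
    · intro u v huv
      rcases star_adj_elim huv with ⟨j, i, hi, hu, hv⟩ | ⟨j, i, hi, hv, hu⟩ |
        ⟨j, i, i', hii, hu, hv⟩ | ⟨j, i, i', hii, hv, hu⟩ <;> subst hu <;> subst hv
      · simp only
        have h0 : (⟨i.val, by rw [hlen j]; exact i.isLt⟩ : Fin (𝓛 j).length) =
            ⟨0, by rw [hlen j]; exact lt_of_lt_of_le Nat.zero_lt_one (hℓ j)⟩ := Fin.ext hi
        rw [h0]
        exact hA1 j _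
      · simp only
        have h0 : (⟨i.val, by rw [hlen j]; exact i.isLt⟩ : Fin (𝓛 j).length) =
            ⟨0, by rw [hlen j]; exact lt_of_lt_of_le Nat.zero_lt_one (hℓ j)⟩ := Fin.ext hi
        rw [h0]
        exact (hA1 j _).symm
      · simp only
        have hk : i.val + 1 < (𝓛 j).length := by rw [hlen j]; rw [← hii]; exact i'.isLt
        have h0 : (⟨i'.val, by rw [hlen j]; exact i'.isLt⟩ : Fin (𝓛 j).length) =
            ⟨i.val + 1, hk⟩ := Fin.ext hii
        rw [h0]
        exact hA2 j i.val hk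
      · simp only
        have hk : i.val + 1 < (𝓛 j).length := by rw [hlen j]; rw [← hii]; exact i'.isLt
        have h0 : (⟨i'.val, by rw [hlen j]; exact i'.isLt⟩ : Fin (𝓛 j).length) =
            ⟨i.val + 1, hk⟩ := Fin.ext hii
        rw [h0]
        exact (hA2 j i.val hk).symm
  · rintro ⟨f, hinj, hadj⟩
    refine ⟨fun x => {f x}, fun x => ⟨f x, rfl⟩, ?_, ?_, ?_⟩
    · intro x y hxy
      simp only [Set.disjoint_singleton_left, Set.mem_singleton_iff]
      exact fun h => hxy (hinj h)
    · intro x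
      haveI : Nonempty ({f x} : Set β) := ⟨⟨f x, rfl⟩⟩
      refine ⟨fun u v => ?_⟩
      have huv : u = v := Subtype.ext ((u.2 : u.1 = f x).trans (v.2 : v.1 = f x).symm)
      rw [huv]
    · intro u v huv
      exact ⟨f u, rfl, f v, rfl, hadj u v huv⟩
end

section
/- Let T be a graph such that for every graph G, G contains T as a minor if and only if G contains T as a subgraph. Then every connected component of T is either a path or a subdivision of the claw K_{1,3}. -/
set_option linter.unusedSectionVars false

open SimpleGraph

namespace Stmt5

variable {α : Type} [Fintype α] [DecidableEq α] (T : SimpleGraph α) [DecidableRel T.Adj]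

lemma induce_connected_star {β : Type} (G : SimpleGraph β) (s : Set β) (c : β) (hc : c ∈ s)
    (h : ∀ v ∈ s, v = c ∨ G.Adj c v) : (G.induce s).Connected := by
  rw [connected_iff]
  refine ⟨?_, ⟨⟨c, hc⟩⟩⟩
  have key : ∀ v : s, (G.induce s).Reachable ⟨c, hc⟩ v := by
    rintro ⟨v, hv⟩
    rcases h v hv with rfl | hadj
    · rfl
    · exact SimpleGraph.Adj.reachable (by simpa using hadj)
  intro x y
  exact (key x).symm.trans (key y)

lemma eq_of_mem_mem {e : Sym2 α} {x y : α} (hx : x ∈ e) (hy : y ∈ e) (hxy : x ≠ y) :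
    e = s(x, y) := by
  induction e using Sym2.ind with
  | _ a b =>
    rw [Sym2.mem_iff] at hx hy
    rcases hx with rfl | rfl <;> rcases hy with rfl | rfl
    · exact absurd rfl hxy
    · rfl
    · exact Sym2.eq_swap
    · exact absurd rfl hxy

lemma adj_of_mem_mem {e : Sym2 α} (he : e ∈ T.edgeSet) {x y : α} (hx : x ∈ e) (hy : y ∈ e)
    (hxy : x ≠ y) : T.Adj x y := by
  rw [← T.mem_edgeSet, ← eq_of_mem_mem hx hy hxy]; exact he

/-- The subdivision graph of `T`: each edge replaced by a path of length 2. -/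
def Sdiv : SimpleGraph (α ⊕ ↥T.edgeSet) where
  Adj x y := ∃ (a : α) (e : ↥T.edgeSet), a ∈ (e : Sym2 α) ∧
    ((x = .inl a ∧ y = .inr e) ∨ (x = .inr e ∧ y = .inl a))
  symm := by
    refine ⟨?_⟩
    rintro x y ⟨a, e, hae, (⟨rfl, rfl⟩ | ⟨rfl, rfl⟩)⟩
    · exact ⟨a, e, hae, Or.inr ⟨rfl, rfl⟩⟩
    · exact ⟨a, e, hae, Or.inl ⟨rfl, rfl⟩⟩
  loopless := by
    refine ⟨?_⟩
    rintro x ⟨a, e, hae, (⟨rfl, he⟩ | ⟨rfl, he⟩)⟩ <;> exact nomatch he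

lemma sdiv_adj_inl_inr {a : α} {e : ↥T.edgeSet} :
    (Sdiv T).Adj (.inl a) (.inr e) ↔ a ∈ (e : Sym2 α) := by
  constructor
  · rintro ⟨a', e', hae, (⟨ha, he⟩ | ⟨ha, he⟩)⟩
    · cases Sum.inl.inj ha; cases Sum.inr.inj he; exact hae
    · exact nomatch ha
  · intro hae; exact ⟨a, e, hae, Or.inl ⟨rfl, rfl⟩⟩

lemma sdiv_adj_inl {a : α} {y} (h : (Sdiv T).Adj (.inl a) y) :
    ∃ e : ↥T.edgeSet, y = .inr e ∧ a ∈ (e : Sym2 α) := by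
  obtain ⟨a', e', hae, (⟨ha, rfl⟩ | ⟨ha, rfl⟩)⟩ := h
  · cases Sum.inl.inj ha; exact ⟨e', rfl, hae⟩
  · exact nomatch ha

lemma sdiv_adj_inr {e : ↥T.edgeSet} {y} (h : (Sdiv T).Adj (.inr e) y) :
    ∃ b : α, y = .inl b ∧ b ∈ (e : Sym2 α) := by
  obtain ⟨a', e', hae, (⟨ha, rfl⟩ | ⟨ha, rfl⟩)⟩ := h
  · exact nomatch ha
  · cases Sum.inr.inj ha; exact ⟨a', rfl, hae⟩

lemma sdiv_isMinor : IsMinor T (Sdiv T) := by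
  classical
  refine ⟨fun x => insert (Sum.inl x) {y | ∃ e : ↥T.edgeSet, y = Sum.inr e ∧ (e : Sym2 α).out.1 = x},
    fun x => ⟨Sum.inl x, Set.mem_insert _ _⟩, ?_, ?_, ?_⟩
  · intro x y hxy
    rw [Set.disjoint_left]
    rintro z (rfl | ⟨e, rfl, he⟩) hz
    · rcases hz with h1 | ⟨e', he', _⟩
      · exact hxy (Sum.inl.inj h1)
      · exact nomatch he'
    · rcases hz with h1 | ⟨e', he', he2⟩
      · exact nomatch h1
      · cases Sum.inr.inj he'; exact hxy (he ▸ he2 ▸ rfl)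
  · intro x
    apply induce_connected_star _ _ (Sum.inl x) (Set.mem_insert _ _)
    rintro v (rfl | ⟨e, rfl, he⟩)
    · exact Or.inl rfl
    · exact Or.inr ((sdiv_adj_inl_inr T).2 (he ▸ Sym2.out_fst_mem (e : Sym2 α)))
  · intro u v huv
    have he₀ : s(u, v) ∈ T.edgeSet := T.mem_edgeSet.2 huv
    set e : ↥T.edgeSet := ⟨s(u, v), he₀⟩ with hedef
    have hmem : (e : Sym2 α).out.1 ∈ s(u, v) := Sym2.out_fst_mem (e : Sym2 α)
    rw [Sym2.mem_iff] at hmem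
    rcases hmem with h1 | h1
    · refine ⟨Sum.inr e, Or.inr ⟨e, rfl, h1⟩, Sum.inl v, Set.mem_insert _ _, ?_⟩
      exact ((Sdiv T).adj_symm ((sdiv_adj_inl_inr T).2 (by simp [hedef])))
    · refine ⟨Sum.inl u, Set.mem_insert _ _, Sum.inr e, Or.inr ⟨e, rfl, h1⟩, ?_⟩
      exact (sdiv_adj_inl_inr T).2 (by simp [hedef])


lemma proj (n : ℕ) : ∀ {a b : α} (q : (Sdiv T).Walk (.inl a) (.inl b)), q.length = n →
    ∃ P : T.Walk a b, 2 * P.length ≤ q.length ∧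
      (∀ x, x ∈ P.support → Sum.inl x ∈ q.support) ∧
      (q.IsPath → P.IsPath ∧ 2 * P.length = q.length) := by
  induction n using Nat.strong_induction_on with
  | _ n IH =>
    intro a b q hq
    cases q with
    | nil =>
      exact ⟨Walk.nil, by simp, by simp, fun _ => ⟨Walk.IsPath.nil, by simp⟩⟩
    | @cons _ w _ h₁ q₁ =>
      obtain ⟨e, rfl, hae⟩ := sdiv_adj_inl T h₁
      cases q₁ with
      | @cons _ w₂ _ h₂ q₂ =>
        obtain ⟨a₁, rfl, ha₁e⟩ := sdiv_adj_inr T h₂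
        have hlen : q₂.length < n := by
          subst hq; simp [Walk.length_cons]
        obtain ⟨P', hle, hsupp, hpath⟩ := IH q₂.length hlen q₂ rfl
        have hsupp' : ∀ x, Sum.inl x ∈ q₂.support →
            Sum.inl x ∈ (Walk.cons h₁ (Walk.cons h₂ q₂)).support := by
          intro x hx
          rw [Walk.support_cons, Walk.support_cons]
          exact List.mem_cons_of_mem _ (List.mem_cons_of_mem _ hx)
        by_cases haa : a = a₁
        · subst haa
          refine ⟨P', by simp [Walk.length_cons]; omega, fun x hx => hsupp' x (hsupp x hx), ?_⟩
          intro hp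
          exfalso
          have hnd := hp.support_nodup
          rw [Walk.support_cons, Walk.support_cons] at hnd
          exact (List.nodup_cons.mp hnd).1
            (List.mem_cons_of_mem _ (Walk.start_mem_support q₂))
        · have hadj : T.Adj a a₁ := adj_of_mem_mem T e.2 hae ha₁e haa
          refine ⟨Walk.cons hadj P', by simp [Walk.length_cons]; omega, ?_, ?_⟩
          · intro x hx
            rw [Walk.support_cons] at hx
            rcases List.mem_cons.mp hx with hx | hx
            · rw [hx, Walk.support_cons]; exact List.mem_cons_self
            · exact hsupp' x (hsupp x hx)
          · intro hp
            have hp₂ : q₂.IsPath := (hp.of_cons).of_cons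
            obtain ⟨hP'path, hP'len⟩ := hpath hp₂
            have hnd := hp.support_nodup
            rw [Walk.support_cons, Walk.support_cons] at hnd
            refine ⟨hP'path.cons ?_, by simp [Walk.length_cons]; omega⟩
            intro hmem
            exact (List.nodup_cons.mp hnd).1 (List.mem_cons_of_mem _ (hsupp a hmem))


lemma path_length_one_of_edge {a b : α} (p : T.Walk a b) (hp : p.IsPath)
    (he : s(a, b) ∈ p.edges) : p.length = 1 := by
  cases p with
  | nil => simp at he
  | @cons _ c _ h p' =>
    rw [Walk.edges_cons, List.mem_cons] at he
    rcases he with he | he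
    · rw [Sym2.eq_iff] at he
      rcases he with ⟨-, rfl⟩ | ⟨rfl, rfl⟩
      · have : p' = Walk.nil := Walk.isPath_iff_eq_nil.mp hp.of_cons
        subst this; simp
      · exact absurd h (T.loopless.irrefl _)
    · exfalso
      have ha : a ∈ p'.support := Walk.fst_mem_support_of_mem_edges p' he
      have hnd := hp.support_nodup
      rw [Walk.support_cons] at hnd
      exact (List.nodup_cons.mp hnd).1 ha

lemma acyclic_of_embed (f : α → α ⊕ ↥T.edgeSet) (hinj : Function.Injective f)
    (hadj : ∀ u v, T.Adj u v → (Sdiv T).Adj (f u) (f v)) : T.IsAcyclic := by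
  classical
  intro v c hc
  cases c with
  | nil => exact hc.ne_nil rfl
  | @cons _ w _ h p =>
    rw [Walk.cons_isCycle_iff] at hc
    obtain ⟨hppath, hpedge⟩ := hc
    have hne : ∃ d : ℕ, ∃ (a b : α) (P : T.Walk a b),
        T.Adj a b ∧ P.IsPath ∧ s(a, b) ∉ P.edges ∧ P.length = d := by
      refine ⟨p.length, w, v, p, h.symm, hppath, ?_, rfl⟩
      rwa [Sym2.eq_swap]
    obtain ⟨a, b, P, hab, hP, hPe, hPlen⟩ := Nat.find_spec hne
    have hm2 : 2 ≤ Nat.find hne := by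
      rw [← hPlen]
      cases P with
      | nil => exact absurd hab (T.loopless.irrefl _)
      | @cons _ c _ h' P' =>
        cases P' with
        | nil =>
          exact absurd (by rw [Walk.edges_cons]; exact List.mem_cons_self) hPe
        | cons h'' P'' =>
          rw [Walk.length_cons, Walk.length_cons]; omega
    let fhom : T →g Sdiv T := ⟨f, fun {u v} h => hadj u v h⟩
    have key : ∀ (a b : α) (P : T.Walk a b), T.Adj a b → P.IsPath →
        P.length = Nat.find hne →
        ∀ (x : α) (e : ↥T.edgeSet), f a = Sum.inl x → f b = Sum.inr e → False := by
      clear hPlen hPe hP hab P hppath hpedge p h a b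
      intro a b P hab hP hPlen x e hfa hfb
      have hcoe : ⇑fhom = f := rfl
      have hfa' : fhom a = Sum.inl x := by rw [hcoe]; exact hfa
      have hfb' : fhom b = Sum.inr e := by rw [hcoe]; exact hfb
      have hxe : x ∈ (e : Sym2 α) := by
        have h2 := hadj a b hab
        rw [hfa, hfb] at h2
        exact (sdiv_adj_inl_inr T).mp h2
      set r : (Sdiv T).Walk (Sum.inr e) (Sum.inl x) :=
        ((P.map fhom).copy hfa' hfb').reverse with hrdef
      have hrpath : r.IsPath := by
        rw [hrdef, Walk.isPath_reverse_iff, Walk.isPath_copy]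
        exact Walk.map_isPath_of_injective (by rw [hcoe]; exact hinj) hP
      have hrlen : r.length = Nat.find hne := by
        rw [hrdef, Walk.length_reverse, Walk.length_copy, Walk.length_map]
        exact hPlen
      clear_value r
      clear hrdef
      cases r with
      | @cons _ w₂ _ h₂ r₁ =>
        obtain ⟨b₀, hw₂, hb₀e⟩ := sdiv_adj_inr T h₂
        subst hw₂
        have hr₁path : r₁.IsPath := hrpath.of_cons
        have hr₁len : r₁.length = Nat.find hne - 1 := by
          rw [Walk.length_cons] at hrlen; omega
        have hb₀x : b₀ ≠ x := by
          intro hbx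
          subst hbx
          have hnil : r₁ = Walk.nil := Walk.isPath_iff_eq_nil.mp hr₁path
          rw [hnil, Walk.length_nil] at hr₁len
          omega
        have hadjb : T.Adj b₀ x := adj_of_mem_mem T e.2 hb₀e hxe hb₀x
        obtain ⟨P₁, hle₁, hsupp₁, hpp₁⟩ := proj T r₁.length r₁ rfl
        obtain ⟨hP₁path, hP₁len⟩ := hpp₁ hr₁path
        rcases Nat.lt_or_ge P₁.length 2 with hsmall | hbig
        · have h1 : P₁.length = 1 := by
            rcases Nat.lt_or_ge P₁.length 1 with h0 | h0
            · exact absurd (Walk.eq_of_length_eq_zero (p := P₁) (by omega)) hb₀x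
            · omega
          cases r₁ with
          | nil => exact hb₀x rfl
          | @cons _ w₃ _ h₃ r₂ =>
            obtain ⟨e₁, hw₃, hb₀e₁⟩ := sdiv_adj_inl T h₃
            subst hw₃
            cases r₂ with
            | @cons _ w₄ _ h₄ r₃ =>
              obtain ⟨c₁, hw₄, hc₁e₁⟩ := sdiv_adj_inr T h₄
              subst hw₄
              have hr₃ : r₃.length = 0 := by
                rw [Walk.length_cons, Walk.length_cons] at hP₁len
                omega
              have hcx : (Sum.inl c₁ : α ⊕ ↥T.edgeSet) = Sum.inl x :=
                Walk.eq_of_length_eq_zero hr₃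
              have hcx' : c₁ = x := Sum.inl.inj hcx
              subst hcx'
              have hee₁ : e = e₁ := by
                apply Subtype.ext
                rw [eq_of_mem_mem hb₀e hxe hb₀x, eq_of_mem_mem hb₀e₁ hc₁e₁ hb₀x]
              have hnd := hrpath.support_nodup
              rw [Walk.support_cons, Walk.support_cons] at hnd
              apply (List.nodup_cons.mp hnd).1
              rw [hee₁]
              exact List.mem_cons_of_mem _
                (by rw [Walk.support_cons]; exact List.mem_cons_self)
        · have hnotedge : s(b₀, x) ∉ P₁.edges := by
            intro hmem
            have := path_length_one_of_edge T P₁ hP₁path hmem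
            omega
          have hfound : ∃ (a' b' : α) (P' : T.Walk a' b'),
              T.Adj a' b' ∧ P'.IsPath ∧ s(a', b') ∉ P'.edges ∧ P'.length = P₁.length :=
            ⟨b₀, x, P₁, hadjb, hP₁path, hnotedge, rfl⟩
          exact Nat.find_min hne (by omega) hfound
    have hfab := hadj a b hab
    cases hfa : f a with
    | inl x =>
      rw [hfa] at hfab
      obtain ⟨e, hfb, _⟩ := sdiv_adj_inl T hfab
      exact key a b P hab hP hPlen x e hfa hfb
    | inr e =>
      rw [hfa] at hfab
      obtain ⟨x, hfb, _⟩ := sdiv_adj_inr T hfab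
      exact key b a P.reverse hab.symm hP.reverse
        (by rw [Walk.length_reverse]; exact hPlen) x e hfb hfa


lemma exists_other {e : Sym2 α} {x : α} (hx : x ∈ e) : ∃ y, e = s(x, y) := by
  induction e using Sym2.ind with
  | _ p q =>
    rw [Sym2.mem_iff] at hx
    rcases hx with rfl | rfl
    · exact ⟨q, rfl⟩
    · exact ⟨p, Sym2.eq_swap⟩

lemma three_neighbors {u : α} (h3 : 3 ≤ T.degree u) :
    ∃ n₁ n₂ n₃ : α, n₁ ≠ n₂ ∧ n₁ ≠ n₃ ∧ n₂ ≠ n₃ ∧ T.Adj u n₁ ∧ T.Adj u n₂ ∧ T.Adj u n₃ := by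
  obtain ⟨t, hts, htc⟩ := Finset.exists_subset_card_eq (n := 3) (s := T.neighborFinset u) h3
  obtain ⟨n₁, n₂, n₃, h12, h13, h23, rfl⟩ := Finset.card_eq_three.mp htc
  refine ⟨n₁, n₂, n₃, h12, h13, h23, ?_, ?_, ?_⟩ <;>
    rw [← SimpleGraph.mem_neighborFinset] <;> apply hts <;> simp

lemma embed_deg3_inl (f : α → α ⊕ ↥T.edgeSet) (hinj : Function.Injective f)
    (hadj : ∀ u v, T.Adj u v → (Sdiv T).Adj (f u) (f v)) {u : α} (h3 : 3 ≤ T.degree u) :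
    ∃ x : α, f u = Sum.inl x ∧ 3 ≤ T.degree x := by
  obtain ⟨n₁, n₂, n₃, h12, h13, h23, ha1, ha2, ha3⟩ := three_neighbors T h3
  cases hfu : f u with
  | inr e =>
    exfalso
    have g1 := hadj u n₁ ha1; have g2 := hadj u n₂ ha2; have g3 := hadj u n₃ ha3
    rw [hfu] at g1 g2 g3
    obtain ⟨b₁, hb₁, hm₁⟩ := sdiv_adj_inr T g1
    obtain ⟨b₂, hb₂, hm₂⟩ := sdiv_adj_inr T g2
    obtain ⟨b₃, hb₃, hm₃⟩ := sdiv_adj_inr T g3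
    obtain ⟨e', he'⟩ := e
    induction e' using Sym2.ind with
    | _ p q =>
      simp only [Sym2.mem_iff] at hm₁ hm₂ hm₃
      have : b₁ = b₂ ∨ b₁ = b₃ ∨ b₂ = b₃ := by
        rcases hm₁ with rfl | rfl <;> rcases hm₂ with rfl | rfl <;>
          rcases hm₃ with rfl | rfl <;> tauto
      rcases this with hh | hh | hh
      · exact h12 (hinj (by rw [hb₁, hb₂, hh]))
      · exact h13 (hinj (by rw [hb₁, hb₃, hh]))
      · exact h23 (hinj (by rw [hb₂, hb₃, hh]))
  | inl x =>
    refine ⟨x, rfl, ?_⟩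
    have g1 := hadj u n₁ ha1; have g2 := hadj u n₂ ha2; have g3 := hadj u n₃ ha3
    rw [hfu] at g1 g2 g3
    obtain ⟨e₁, hb₁, hm₁⟩ := sdiv_adj_inl T g1
    obtain ⟨e₂, hb₂, hm₂⟩ := sdiv_adj_inl T g2
    obtain ⟨e₃, hb₃, hm₃⟩ := sdiv_adj_inl T g3
    obtain ⟨y₁, hy₁⟩ := exists_other hm₁
    obtain ⟨y₂, hy₂⟩ := exists_other hm₂
    obtain ⟨y₃, hy₃⟩ := exists_other hm₃
    have hady : ∀ (e : ↥T.edgeSet) (y : α), (e : Sym2 α) = s(x, y) → T.Adj x y := by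
      intro e y he
      have := e.2
      rw [he] at this
      exact T.mem_edgeSet.mp this
    have hd1 : T.Adj x y₁ := hady e₁ y₁ hy₁
    have hd2 : T.Adj x y₂ := hady e₂ y₂ hy₂
    have hd3 : T.Adj x y₃ := hady e₃ y₃ hy₃
    have hyne : ∀ (ni nj : α) (ei ej : ↥T.edgeSet) (yi yj : α), ni ≠ nj →
        f ni = Sum.inr ei → f nj = Sum.inr ej → (ei : Sym2 α) = s(x, yi) →
        (ej : Sym2 α) = s(x, yj) → yi ≠ yj := by
      rintro ni nj ei ej yi yj hne hfi hfj hei hej rfl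
      exact hne (hinj (by rw [hfi, hfj, Subtype.ext (hei.trans hej.symm)]))
    have hy12 : y₁ ≠ y₂ := hyne n₁ n₂ e₁ e₂ y₁ y₂ h12 hb₁ hb₂ hy₁ hy₂
    have hy13 : y₁ ≠ y₃ := hyne n₁ n₃ e₁ e₃ y₁ y₃ h13 hb₁ hb₃ hy₁ hy₃
    have hy23 : y₂ ≠ y₃ := hyne n₂ n₃ e₂ e₃ y₂ y₃ h23 hb₂ hb₃ hy₂ hy₃
    have hsub : ({y₁, y₂, y₃} : Finset α) ⊆ T.neighborFinset x := by
      intro z hz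
      simp only [Finset.mem_insert, Finset.mem_singleton] at hz
      rcases hz with rfl | rfl | rfl <;> rw [SimpleGraph.mem_neighborFinset] <;> assumption
    calc (3 : ℕ) = ({y₁, y₂, y₃} : Finset α).card := by
          exact (Finset.card_eq_three.mpr ⟨y₁, y₂, y₃, hy12, hy13, hy23, rfl⟩).symm
      _ ≤ (T.neighborFinset x).card := Finset.card_le_card hsub
      _ = T.degree x := rfl

lemma no_two_deg3 (f : α → α ⊕ ↥T.edgeSet) (hinj : Function.Injective f)
    (hadj : ∀ u v, T.Adj u v → (Sdiv T).Adj (f u) (f v)) :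
    ∀ u w, u ≠ w → T.Reachable u w → 3 ≤ T.degree u → 3 ≤ T.degree w → False := by
  classical
  intro u w huw hr hu hw
  have hne : ∃ d : ℕ, ∃ (u' w' : α) (W : T.Walk u' w'),
      u' ≠ w' ∧ 3 ≤ T.degree u' ∧ 3 ≤ T.degree w' ∧ W.length = d :=
    ⟨(hr.some).length, u, w, hr.some, huw, hu, hw, rfl⟩
  obtain ⟨u', w', W, hne', hu', hw', hlen⟩ := Nat.find_spec hne
  have hm1 : 1 ≤ Nat.find hne := by
    rcases Nat.eq_zero_or_pos (Nat.find hne) with h0 | h1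
    · rw [h0] at hlen
      exact absurd (Walk.eq_of_length_eq_zero hlen) hne'
    · exact h1
  obtain ⟨x, hfu, hx3⟩ := embed_deg3_inl T f hinj hadj hu'
  obtain ⟨y, hfw, hy3⟩ := embed_deg3_inl T f hinj hadj hw'
  have hxy : x ≠ y := fun hh => hne' (hinj (by rw [hfu, hfw, hh]))
  let fhom : T →g Sdiv T := ⟨f, fun {a b} h => hadj a b h⟩
  have hcoe : ⇑fhom = f := rfl
  have hfu' : fhom u' = Sum.inl x := by rw [hcoe]; exact hfu
  have hfw' : fhom w' = Sum.inl y := by rw [hcoe]; exact hfw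
  set q : (Sdiv T).Walk (Sum.inl x) (Sum.inl y) := (W.map fhom).copy hfu' hfw' with hqdef
  have hqlen : q.length = Nat.find hne := by
    rw [hqdef, Walk.length_copy, Walk.length_map]; exact hlen
  obtain ⟨P, hle, -, -⟩ := proj T q.length q rfl
  rw [hqlen] at hle
  exact Nat.find_min hne (by omega) ⟨x, y, P, hxy, hx3, hy3, rfl⟩


section Split

variable (v n₁ n₂ : α)

/-- `T` with the vertex `v` split into two: a new vertex `z` adjacent to `v`, `n₁`, `n₂`,
with the edges `v n₁` and `v n₂` removed. -/
def Gsplit : SimpleGraph (α ⊕ Unit) where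
  Adj x y :=
    (∃ a b : α, x = .inl a ∧ y = .inl b ∧ T.Adj a b ∧ ¬(a = v ∧ (b = n₁ ∨ b = n₂)) ∧
      ¬(b = v ∧ (a = n₁ ∨ a = n₂))) ∨
    (∃ a : α, ((x = .inl a ∧ y = .inr ()) ∨ (x = .inr () ∧ y = .inl a)) ∧
      (a = v ∨ a = n₁ ∨ a = n₂))
  symm := by
    refine ⟨?_⟩
    rintro x y (⟨a, b, rfl, rfl, hab, h1, h2⟩ | ⟨a, (⟨rfl, rfl⟩ | ⟨rfl, rfl⟩), hm⟩)
    · exact Or.inl ⟨b, a, rfl, rfl, hab.symm, h2, h1⟩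
    · exact Or.inr ⟨a, Or.inr ⟨rfl, rfl⟩, hm⟩
    · exact Or.inr ⟨a, Or.inl ⟨rfl, rfl⟩, hm⟩
  loopless := by
    refine ⟨?_⟩
    rintro x (⟨a, b, rfl, hba, hab, h1, h2⟩ | ⟨a, (⟨rfl, hh⟩ | ⟨rfl, hh⟩), hm⟩)
    · cases Sum.inl.inj hba; exact T.loopless.irrefl _ hab
    · exact nomatch hh
    · exact nomatch hh

instance : DecidableRel (Gsplit T v n₁ n₂).Adj := fun x y => by
  dsimp [Gsplit]; infer_instance

lemma gsplit_adj_inl_inl {a b : α} : (Gsplit T v n₁ n₂).Adj (.inl a) (.inl b) ↔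
    T.Adj a b ∧ ¬(a = v ∧ (b = n₁ ∨ b = n₂)) ∧ ¬(b = v ∧ (a = n₁ ∨ a = n₂)) := by
  constructor
  · rintro (⟨a', b', ha, hb, hab, h1, h2⟩ | ⟨a', (⟨ha, hh⟩ | ⟨ha, hh⟩), hm⟩)
    · cases Sum.inl.inj ha; cases Sum.inl.inj hb; exact ⟨hab, h1, h2⟩
    · exact nomatch hh
    · exact nomatch ha
  · rintro ⟨hab, h1, h2⟩
    exact Or.inl ⟨a, b, rfl, rfl, hab, h1, h2⟩

lemma gsplit_adj_inl_inr {a : α} {u : Unit} : (Gsplit T v n₁ n₂).Adj (.inl a) (.inr u) ↔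
    (a = v ∨ a = n₁ ∨ a = n₂) := by
  constructor
  · rintro (⟨a', b', ha, hb, hab, h1, h2⟩ | ⟨a', (⟨ha, hh⟩ | ⟨ha, hh⟩), hm⟩)
    · exact nomatch hb
    · cases Sum.inl.inj ha; exact hm
    · exact nomatch ha
  · intro hm
    exact Or.inr ⟨a, Or.inl ⟨rfl, rfl⟩, hm⟩

lemma gsplit_adj_inr {y} {u : Unit} (h : (Gsplit T v n₁ n₂).Adj (.inr u) y) :
    ∃ a : α, y = .inl a ∧ (a = v ∨ a = n₁ ∨ a = n₂) := by
  rcases h with ⟨a', b', ha, hb, hab, h1, h2⟩ | ⟨a', (⟨ha, hh⟩ | ⟨ha, hh⟩), hm⟩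
  · exact nomatch ha
  · exact nomatch ha
  · exact ⟨a', hh, hm⟩

lemma gsplit_minor (h1 : T.Adj v n₁) (h2 : T.Adj v n₂) : IsMinor T (Gsplit T v n₁ n₂) := by
  classical
  refine ⟨fun x => if x = v then {Sum.inl v, Sum.inr ()} else {Sum.inl x}, ?_, ?_, ?_, ?_⟩
  · intro x
    by_cases hx : x = v <;> simp [hx]
  · intro x y hxy
    rw [Set.disjoint_left]
    intro z hz hz'
    by_cases hx : x = v <;> by_cases hy : y = v <;> simp [hx, hy] at hz hz'
    · exact hxy (hx.trans hy.symm)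
    · rcases hz with rfl | rfl
      · exact hy (Sum.inl.inj hz').symm
      · exact nomatch hz'
    · rcases hz' with rfl | rfl
      · exact hx (Sum.inl.inj hz).symm
      · exact nomatch hz
    · exact hxy (Sum.inl.inj (hz.symm.trans hz'))
  · intro x
    beta_reduce
    by_cases hx : x = v
    · rw [show (if x = v then ({Sum.inl v, Sum.inr ()} : Set (α ⊕ Unit)) else {Sum.inl x})
          = {Sum.inl v, Sum.inr ()} from if_pos hx]
      apply induce_connected_star _ _ (Sum.inl v) (by simp)
      intro z hz
      simp at hz
      rcases hz with rfl | rfl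
      · exact Or.inl rfl
      · exact Or.inr ((gsplit_adj_inl_inr T v n₁ n₂).mpr (Or.inl rfl))
    · rw [show (if x = v then ({Sum.inl v, Sum.inr ()} : Set (α ⊕ Unit)) else {Sum.inl x})
          = {Sum.inl x} from if_neg hx]
      apply induce_connected_star _ _ (Sum.inl x) (by simp)
      intro z hz
      simp at hz
      exact Or.inl hz
  · intro a b hab
    by_cases ha : a = v <;> by_cases hb : b = v
    · exact absurd hab (by rw [ha, hb]; exact T.loopless.irrefl v)
    · by_cases hbn : b = n₁ ∨ b = n₂
      · refine ⟨Sum.inr (), by simp [ha], Sum.inl b, by simp [hb], ?_⟩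
        exact ((Gsplit T v n₁ n₂).adj_symm ((gsplit_adj_inl_inr T v n₁ n₂).mpr (Or.inr hbn)))
      · refine ⟨Sum.inl a, by simp [ha], Sum.inl b, by simp [hb], ?_⟩
        rw [gsplit_adj_inl_inl]
        exact ⟨hab, fun hc => hbn hc.2, fun hc => hb hc.1⟩
    · by_cases han : a = n₁ ∨ a = n₂
      · refine ⟨Sum.inl a, by simp [ha], Sum.inr (), by simp [hb], ?_⟩
        exact (gsplit_adj_inl_inr T v n₁ n₂).mpr (Or.inr han)
      · refine ⟨Sum.inl a, by simp [ha], Sum.inl b, by simp [hb], ?_⟩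
        rw [gsplit_adj_inl_inl]
        exact ⟨hab, fun hc => ha hc.1, fun hc => han hc.2⟩
    · refine ⟨Sum.inl a, by simp [ha], Sum.inl b, by simp [hb], ?_⟩
      rw [gsplit_adj_inl_inl]
      exact ⟨hab, fun hc => ha hc.1, fun hc => hb hc.1⟩

end Split

lemma degree_le_of_hom {β : Type} [Fintype β] (G : SimpleGraph β) [DecidableRel G.Adj]
    (f : α → β) (hinj : Function.Injective f)
    (hadj : ∀ u v, T.Adj u v → G.Adj (f u) (f v)) (x : α) :
    T.degree x ≤ G.degree (f x) := by
  show (T.neighborFinset x).card ≤ (G.neighborFinset (f x)).card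
  apply Finset.card_le_card_of_injOn f
  · intro a ha
    simp only [Finset.mem_coe, SimpleGraph.mem_neighborFinset] at ha ⊢
    exact hadj x a ha
  · exact Function.Injective.injOn hinj


section SplitDeg

variable (v n₁ n₂ : α)

lemma gsplit_deg_inr (u : Unit) : (Gsplit T v n₁ n₂).degree (.inr u) ≤ 3 := by
  show ((Gsplit T v n₁ n₂).neighborFinset _).card ≤ 3
  have hsub : (Gsplit T v n₁ n₂).neighborFinset (.inr u) ⊆
      {Sum.inl v, Sum.inl n₁, Sum.inl n₂} := by
    intro z hz
    rw [SimpleGraph.mem_neighborFinset] at hz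
    obtain ⟨a, rfl, hm⟩ := gsplit_adj_inr T v n₁ n₂ hz
    simp only [Finset.mem_insert, Finset.mem_singleton]
    rcases hm with rfl | rfl | rfl <;> tauto
  apply le_trans (Finset.card_le_card hsub)
  apply le_trans (Finset.card_insert_le _ _)
  have := Finset.card_insert_le (Sum.inl n₁ : α ⊕ Unit) ({Sum.inl n₂} : Finset (α ⊕ Unit))
  simp only [Finset.card_singleton] at this
  omega

lemma gsplit_deg_inl_v (h12 : n₁ ≠ n₂) (h1 : T.Adj v n₁) (h2 : T.Adj v n₂) :
    (Gsplit T v n₁ n₂).degree (.inl v) ≤ T.degree v - 1 := by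
  show ((Gsplit T v n₁ n₂).neighborFinset _).card ≤ _
  have hsub : (Gsplit T v n₁ n₂).neighborFinset (.inl v) ⊆
      insert (Sum.inr ()) ((((T.neighborFinset v).erase n₂).erase n₁).image Sum.inl) := by
    intro z hz
    rw [SimpleGraph.mem_neighborFinset] at hz
    cases z with
    | inr u => cases u; exact Finset.mem_insert_self _ _
    | inl b =>
      rw [gsplit_adj_inl_inl] at hz
      obtain ⟨hab, hc1, hc2⟩ := hz
      apply Finset.mem_insert_of_mem
      rw [Finset.mem_image]
      refine ⟨b, ?_, rfl⟩
      have hb12 := fun hh => hc1 ⟨rfl, hh⟩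
      rw [Finset.mem_erase, Finset.mem_erase, SimpleGraph.mem_neighborFinset]
      exact ⟨fun hb => hb12 (Or.inl hb), fun hb => hb12 (Or.inr hb), hab⟩
  have hn₂mem : n₂ ∈ T.neighborFinset v := (SimpleGraph.mem_neighborFinset T v n₂).mpr h2
  have hn₁mem : n₁ ∈ (T.neighborFinset v).erase n₂ :=
    Finset.mem_erase.mpr ⟨h12, (SimpleGraph.mem_neighborFinset T v n₁).mpr h1⟩
  have hdeg2 : 2 ≤ T.degree v := by
    show 2 ≤ (T.neighborFinset v).card
    have : ({n₁, n₂} : Finset α) ⊆ T.neighborFinset v := by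
      intro z hz
      simp only [Finset.mem_insert, Finset.mem_singleton] at hz
      rcases hz with rfl | rfl
      · exact (SimpleGraph.mem_neighborFinset T v z).mpr h1
      · exact (SimpleGraph.mem_neighborFinset T v z).mpr h2
    calc 2 = ({n₁, n₂} : Finset α).card := (Finset.card_pair h12).symm
      _ ≤ _ := Finset.card_le_card this
  apply le_trans (Finset.card_le_card hsub)
  apply le_trans (Finset.card_insert_le _ _)
  rw [Finset.card_image_of_injective _ Sum.inl_injective,
    Finset.card_erase_of_mem hn₁mem, Finset.card_erase_of_mem hn₂mem]
  show (T.neighborFinset v).card - 1 - 1 + 1 ≤ (T.neighborFinset v).card - 1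
  have hdeg2' : 2 ≤ (T.neighborFinset v).card := hdeg2
  omega

lemma gsplit_deg_inl (h1 : T.Adj v n₁) (h2 : T.Adj v n₂) (x : α) (hx : x ≠ v) :
    (Gsplit T v n₁ n₂).degree (.inl x) ≤ T.degree x := by
  show ((Gsplit T v n₁ n₂).neighborFinset _).card ≤ _
  by_cases hxn : x = n₁ ∨ x = n₂
  · have hvmem : v ∈ T.neighborFinset x := by
      rw [SimpleGraph.mem_neighborFinset]
      rcases hxn with rfl | rfl
      · exact h1.symm
      · exact h2.symm
    have hsub : (Gsplit T v n₁ n₂).neighborFinset (.inl x) ⊆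
        insert (Sum.inr ()) (((T.neighborFinset x).erase v).image Sum.inl) := by
      intro z hz
      rw [SimpleGraph.mem_neighborFinset] at hz
      cases z with
      | inr u => cases u; exact Finset.mem_insert_self _ _
      | inl b =>
        rw [gsplit_adj_inl_inl] at hz
        obtain ⟨hab, hc1, hc2⟩ := hz
        apply Finset.mem_insert_of_mem
        rw [Finset.mem_image]
        refine ⟨b, ?_, rfl⟩
        rw [Finset.mem_erase, SimpleGraph.mem_neighborFinset]
        exact ⟨fun hb => hc2 ⟨hb, hxn⟩, hab⟩
    apply le_trans (Finset.card_le_card hsub)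
    apply le_trans (Finset.card_insert_le _ _)
    rw [Finset.card_image_of_injective _ Sum.inl_injective, Finset.card_erase_of_mem hvmem]
    have : 1 ≤ (T.neighborFinset x).card := Finset.card_pos.mpr ⟨v, hvmem⟩
    show (T.neighborFinset x).card - 1 + 1 ≤ (T.neighborFinset x).card
    omega
  · have hsub : (Gsplit T v n₁ n₂).neighborFinset (.inl x) ⊆
        (T.neighborFinset x).image Sum.inl := by
      intro z hz
      rw [SimpleGraph.mem_neighborFinset] at hz
      cases z with
      | inr u =>
        exfalso
        rw [gsplit_adj_inl_inr] at hz
        rcases hz with rfl | hz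
        · exact hx rfl
        · exact hxn hz
      | inl b =>
        rw [gsplit_adj_inl_inl] at hz
        rw [Finset.mem_image]
        exact ⟨b, (SimpleGraph.mem_neighborFinset T x b).mpr hz.1, rfl⟩
    apply le_trans (Finset.card_le_card hsub)
    rw [Finset.card_image_of_injective _ Sum.inl_injective]
    exact le_rfl

end SplitDeg

lemma max_deg_le_three
    (h : ∀ (β : Type) [Fintype β] (G : SimpleGraph β), IsMinor T G ↔ ContainsSubgraph T G)
    (u₀ : α) : T.degree u₀ ≤ 3 := by
  by_contra h4
  push_neg at h4
  obtain ⟨v, -, hvmax⟩ := Finset.exists_max_image Finset.univ (fun x => T.degree x) ⟨u₀, Finset.mem_univ u₀⟩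
  have hΔ4 : 4 ≤ T.degree v := le_trans (by omega) (hvmax u₀ (Finset.mem_univ _))
  have h1lt : 1 < (T.neighborFinset v).card := by
    have hlt : 1 < T.degree v := by omega
    exact hlt
  obtain ⟨n₁, hn₁, n₂, hn₂, h12⟩ := Finset.one_lt_card.mp h1lt
  have ha1 : T.Adj v n₁ := (SimpleGraph.mem_neighborFinset T v n₁).mp hn₁
  have ha2 : T.Adj v n₂ := (SimpleGraph.mem_neighborFinset T v n₂).mp hn₂
  obtain ⟨f, hinj, hadj⟩ := (h (α ⊕ Unit) (Gsplit T v n₁ n₂)).mp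
    (gsplit_minor T v n₁ n₂ ha1 ha2)
  set S : Finset α := Finset.univ.filter (fun x => T.degree v ≤ T.degree x) with hS
  have hvS : v ∈ S := by simp [hS]
  have hmap : ∀ x ∈ S, f x ∈ (S.erase v).image Sum.inl := by
    intro x hx
    have hdegx : T.degree v ≤ T.degree x := by
      rw [hS] at hx
      simpa using hx
    have hdegfx : T.degree v ≤ (Gsplit T v n₁ n₂).degree (f x) :=
      le_trans hdegx (degree_le_of_hom T _ f hinj hadj x)
    cases hfx : f x with
    | inr u =>
      exfalso
      rw [hfx] at hdegfx
      have := gsplit_deg_inr T v n₁ n₂ u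
      omega
    | inl x' =>
      rw [hfx] at hdegfx
      rw [Finset.mem_image]
      refine ⟨x', ?_, rfl⟩
      have hx'v : x' ≠ v := by
        intro hh
        subst hh
        have := gsplit_deg_inl_v T x' n₁ n₂ h12 ha1 ha2
        omega
      have hdegx' : T.degree v ≤ T.degree x' :=
        le_trans hdegfx (gsplit_deg_inl T v n₁ n₂ ha1 ha2 x' hx'v)
      rw [Finset.mem_erase]
      exact ⟨hx'v, by simp [hS, hdegx']⟩
  have hcard := Finset.card_le_card_of_injOn f hmap (Function.Injective.injOn hinj)
  rw [Finset.card_image_of_injective _ Sum.inl_injective, Finset.card_erase_of_mem hvS] at hcard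
  have hpos : 1 ≤ S.card := Finset.card_pos.mpr ⟨v, hvS⟩
  omega

end Stmt5

/-- If `T` is a finite graph such that every graph contains `T` as a minor
iff it contains `T` as a subgraph, then `T` is a forest each of whose connected
components is either a path (all degrees at most `2`) or a subdivided claw (exactly one
vertex of degree `3`, all other vertices of degree at most `2`). -/
theorem stmt_5 {α : Type} [Fintype α] [DecidableEq α] (T : SimpleGraph α)
    [DecidableRel T.Adj]
    (h : ∀ (β : Type) [Fintype β] (G : SimpleGraph β),
      IsMinor T G ↔ ContainsSubgraph T G) :
    T.IsAcyclic ∧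
      ∀ c : T.ConnectedComponent,
        (∀ v ∈ c.supp, T.degree v ≤ 2) ∨
        (∃ v ∈ c.supp, T.degree v = 3 ∧ ∀ u ∈ c.supp, u ≠ v → T.degree u ≤ 2) := by
  classical
  obtain ⟨f, hinj, hadj⟩ := (h (α ⊕ ↥T.edgeSet) (Stmt5.Sdiv T)).mp (Stmt5.sdiv_isMinor T)
  constructor
  · exact Stmt5.acyclic_of_embed T f hinj hadj
  · intro c
    by_cases hall : ∀ v ∈ c.supp, T.degree v ≤ 2
    · exact Or.inl hall
    · right
      push_neg at hall
      obtain ⟨v, hv, hdeg⟩ := hall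
      have hd3 := Stmt5.max_deg_le_three T h
      refine ⟨v, hv, le_antisymm (hd3 v) hdeg, ?_⟩
      intro u hu hne
      by_contra hu3
      push_neg at hu3
      have hreach : T.Reachable u v := by
        rw [SimpleGraph.ConnectedComponent.mem_supp_iff] at hu hv
        exact SimpleGraph.ConnectedComponent.exact (hu.trans hv.symm)
      exact Stmt5.no_two_deg3 T f hinj hadj u v hne hreach (by omega) (by omega)
end

section
/- Let A and B be matrices with orthonormal columns in ℂ^n, let Π_A = AA†, Π_B = BB†, R_A = 2Π_A − I, R_B = 2Π_B − I, and U = R_B R_A. Then the +1 eigenspace of U is (range(A) ∩ range(B)) ⊕ (range(A)^⊥ ∩ range(B)^⊥), and the −1 eigenspace of U is (range(A) ∩ range(B)^⊥) ⊕ (range(A)^⊥ ∩ range(B)). -/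
open Matrix

section Aux

variable {E : Type*} [NormedAddCommGroup E] [InnerProductSpace ℂ E] [FiniteDimensional ℂ E]

private lemma refl_eq_one_iff (K L : Submodule ℂ E) (x : E) :
    ((2 : ℂ) • (↑(Submodule.orthogonalProjection L
          ((2 : ℂ) • (↑(Submodule.orthogonalProjection K x) : E) - x)) : E)
        - ((2 : ℂ) • (↑(Submodule.orthogonalProjection K x) : E) - x) = x)
      ↔ x ∈ (K ⊓ L) ⊔ (Kᗮ ⊓ Lᗮ) := by
  set u : E := ↑(Submodule.orthogonalProjection K x) with hu_def
  have hu : u ∈ K := SetLike.coe_mem _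
  have hv : x - u ∈ Kᗮ := Submodule.sub_starProjection_mem_orthogonal x
  constructor
  · intro h
    set y : E := (2 : ℂ) • u - x with hy_def
    have hPLy : (↑(Submodule.orthogonalProjection L y) : E) = u := by
      have h2 : (2 : ℂ) • (↑(Submodule.orthogonalProjection L y) : E) = (2 : ℂ) • u := by
        rw [sub_eq_iff_eq_add] at h
        rw [h, hy_def]; module
      exact smul_right_injective E two_ne_zero h2
    have huL : u ∈ L := hPLy ▸ SetLike.coe_mem _
    have hyv : y - u ∈ Lᗮ := by
      have : y - (↑(Submodule.orthogonalProjection L y) : E) ∈ Lᗮ :=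
        Submodule.sub_starProjection_mem_orthogonal (K := L) y
      rwa [hPLy] at this
    have hvL : x - u ∈ Lᗮ := by
      have : -(y - u) ∈ Lᗮ := neg_mem hyv
      have heq : -(y - u) = x - u := by rw [hy_def]; module
      rwa [heq] at this
    refine Submodule.mem_sup.mpr ⟨u, ⟨hu, huL⟩, x - u, ⟨hv, hvL⟩, by abel⟩
  · intro h
    rcases Submodule.mem_sup.mp h with ⟨a, ⟨haK, haL⟩, b, ⟨hbK, hbL⟩, hab⟩
    have hPK : u = a := by
      rw [hu_def]
      exact Submodule.eq_starProjection_of_mem_orthogonal haK (by rw [← hab]; simpa using hbK)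
    have hy : (2 : ℂ) • u - x = a - b := by
      rw [hPK, ← hab]; module
    have hPL : (↑(Submodule.orthogonalProjection L ((2 : ℂ) • u - x)) : E) = a :=
      Submodule.eq_starProjection_of_mem_orthogonal haL (by rw [hy]; simpa using neg_mem hbL)
    rw [hPL, hy, ← hab]; module

private lemma refl_eq_neg_one_iff (K L : Submodule ℂ E) (x : E) :
    ((2 : ℂ) • (↑(Submodule.orthogonalProjection L
          ((2 : ℂ) • (↑(Submodule.orthogonalProjection K x) : E) - x)) : E)
        - ((2 : ℂ) • (↑(Submodule.orthogonalProjection K x) : E) - x) = -x)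
      ↔ x ∈ (K ⊓ Lᗮ) ⊔ (Kᗮ ⊓ L) := by
  set u : E := ↑(Submodule.orthogonalProjection K x) with hu_def
  have hu : u ∈ K := SetLike.coe_mem _
  have hv : x - u ∈ Kᗮ := Submodule.sub_starProjection_mem_orthogonal x
  constructor
  · intro h
    set y : E := (2 : ℂ) • u - x with hy_def
    have hPLy : (↑(Submodule.orthogonalProjection L y) : E) = -(x - u) := by
      have h2 : (2 : ℂ) • (↑(Submodule.orthogonalProjection L y) : E) = (2 : ℂ) • (-(x - u)) := by
        rw [sub_eq_iff_eq_add] at h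
        rw [h, hy_def]; module
      exact smul_right_injective E two_ne_zero h2
    have hvL : -(x - u) ∈ L := hPLy ▸ SetLike.coe_mem _
    have hyv : y - (-(x - u)) ∈ Lᗮ := by
      have : y - (↑(Submodule.orthogonalProjection L y) : E) ∈ Lᗮ :=
        Submodule.sub_starProjection_mem_orthogonal (K := L) y
      rwa [hPLy] at this
    have huL : u ∈ Lᗮ := by
      have heq : y - (-(x - u)) = u := by rw [hy_def]; module
      rwa [heq] at hyv
    refine Submodule.mem_sup.mpr ⟨u, ⟨hu, huL⟩, x - u, ⟨hv, neg_neg (x - u) ▸ neg_mem hvL⟩,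
      by abel⟩
  · intro h
    rcases Submodule.mem_sup.mp h with ⟨a, ⟨haK, haL⟩, b, ⟨hbK, hbL⟩, hab⟩
    have hPK : u = a := by
      rw [hu_def]
      exact Submodule.eq_starProjection_of_mem_orthogonal haK (by rw [← hab]; simpa using hbK)
    have hy : (2 : ℂ) • u - x = a - b := by
      rw [hPK, ← hab]; module
    have hPL : (↑(Submodule.orthogonalProjection L ((2 : ℂ) • u - x)) : E) = -b := by
      refine Submodule.eq_starProjection_of_mem_orthogonal (neg_mem hbL) ?_
      have heq : (2 : ℂ) • u - x - -b = a := by rw [hy]; module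
      rw [heq]; exact haL
    rw [hPL, hy, ← hab]; module

end Aux

private lemma toEL_mul {n p q : ℕ} (M : Matrix (Fin n) (Fin p) ℂ) (N : Matrix (Fin p) (Fin q) ℂ)
    (x : EuclideanSpace ℂ (Fin q)) :
    Matrix.toEuclideanLin (M * N) x = Matrix.toEuclideanLin M (Matrix.toEuclideanLin N x) := by
  simp [Matrix.toEuclideanLin_apply, Matrix.mulVec_mulVec]

private lemma toEL_one {n : ℕ} (x : EuclideanSpace ℂ (Fin n)) :
    Matrix.toEuclideanLin (1 : Matrix (Fin n) (Fin n) ℂ) x = x := by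
  simp [Matrix.toEuclideanLin_apply]

private lemma proj_formula {n k : ℕ} (A : Matrix (Fin n) (Fin k) ℂ) (hA : Aᴴ * A = 1)
    (x : EuclideanSpace ℂ (Fin n)) :
    Matrix.toEuclideanLin (A * Aᴴ) x
      = ↑(Submodule.orthogonalProjection (LinearMap.range (Matrix.toEuclideanLin A)) x) := by
  have hmul := toEL_mul A Aᴴ x
  symm
  rw [hmul]
  have hmem : Matrix.toEuclideanLin A (Matrix.toEuclideanLin Aᴴ x)
      ∈ LinearMap.range (Matrix.toEuclideanLin A) := ⟨_, rfl⟩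
  refine Submodule.eq_starProjection_of_mem_of_inner_eq_zero hmem ?_
  rintro w ⟨z, rfl⟩
  have hadj := Matrix.toEuclideanLin_conjTranspose_eq_adjoint A
  rw [inner_sub_left]
  have h1 : ∀ y : EuclideanSpace ℂ (Fin n),
      (inner ℂ y (Matrix.toEuclideanLin A z) : ℂ)
        = inner ℂ (Matrix.toEuclideanLin Aᴴ y) z := by
    intro y
    rw [hadj, LinearMap.adjoint_inner_left]
  rw [h1, h1]
  have h2 : Matrix.toEuclideanLin Aᴴ (Matrix.toEuclideanLin A (Matrix.toEuclideanLin Aᴴ x))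
      = Matrix.toEuclideanLin Aᴴ x := by
    have : ∀ y, Matrix.toEuclideanLin Aᴴ (Matrix.toEuclideanLin A y) = y := by
      intro y
      rw [← toEL_mul Aᴴ A y, hA, toEL_one]
    exact this _
  rw [h2, sub_self]

/-- Spectral Lemma, ±1 eigenspaces: For `A`, `B` with orthonormal columns,
`U = (2BBᴴ − I)(2AAᴴ − I)` has `+1` eigenspace `(ran A ⊓ ran B) ⊔ (ran Aᗮ ⊓ ran Bᗮ)` and
`−1` eigenspace `(ran A ⊓ ran Bᗮ) ⊔ (ran Aᗮ ⊓ ran B)`. -/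
theorem stmt_9 {n k m : ℕ} (A : Matrix (Fin n) (Fin k) ℂ) (B : Matrix (Fin n) (Fin m) ℂ)
    (hA : Aᴴ * A = 1) (hB : Bᴴ * B = 1) :
    (Module.End.eigenspace
        (Matrix.toEuclideanLin
          (((2 : ℂ) • (B * Bᴴ) - 1) * ((2 : ℂ) • (A * Aᴴ) - 1))) 1
      = (LinearMap.range (Matrix.toEuclideanLin A) ⊓
            LinearMap.range (Matrix.toEuclideanLin B)) ⊔
        ((LinearMap.range (Matrix.toEuclideanLin A))ᗮ ⊓
            (LinearMap.range (Matrix.toEuclideanLin B))ᗮ)) ∧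
    (Module.End.eigenspace
        (Matrix.toEuclideanLin
          (((2 : ℂ) • (B * Bᴴ) - 1) * ((2 : ℂ) • (A * Aᴴ) - 1))) (-1)
      = (LinearMap.range (Matrix.toEuclideanLin A) ⊓
            (LinearMap.range (Matrix.toEuclideanLin B))ᗮ) ⊔
        ((LinearMap.range (Matrix.toEuclideanLin A))ᗮ ⊓
            LinearMap.range (Matrix.toEuclideanLin B))) := by
  set K := LinearMap.range (Matrix.toEuclideanLin A) with hK
  set L := LinearMap.range (Matrix.toEuclideanLin B) with hL
  have happ : ∀ x : EuclideanSpace ℂ (Fin n),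
      Matrix.toEuclideanLin (((2 : ℂ) • (B * Bᴴ) - 1) * ((2 : ℂ) • (A * Aᴴ) - 1)) x
        = (2 : ℂ) • (↑(Submodule.orthogonalProjection L
              ((2 : ℂ) • (↑(Submodule.orthogonalProjection K x) : EuclideanSpace ℂ (Fin n)) - x))
            : EuclideanSpace ℂ (Fin n))
          - ((2 : ℂ) • (↑(Submodule.orthogonalProjection K x) : EuclideanSpace ℂ (Fin n)) - x) := by
    intro x
    have hmul := toEL_mul ((2 : ℂ) • (B * Bᴴ) - 1) ((2 : ℂ) • (A * Aᴴ) - 1) x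
    have hRA : ∀ y : EuclideanSpace ℂ (Fin n),
        Matrix.toEuclideanLin ((2 : ℂ) • (A * Aᴴ) - 1) y
          = (2 : ℂ) • (↑(Submodule.orthogonalProjection K y) : EuclideanSpace ℂ (Fin n)) - y := by
      intro y
      rw [map_sub, _root_.map_smul, LinearMap.sub_apply, LinearMap.smul_apply,
        proj_formula A hA y, toEL_one]
    have hRB : ∀ y : EuclideanSpace ℂ (Fin n),
        Matrix.toEuclideanLin ((2 : ℂ) • (B * Bᴴ) - 1) y
          = (2 : ℂ) • (↑(Submodule.orthogonalProjection L y) : EuclideanSpace ℂ (Fin n)) - y := by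
      intro y
      rw [map_sub, _root_.map_smul, LinearMap.sub_apply, LinearMap.smul_apply,
        proj_formula B hB y, toEL_one]
    rw [hmul, hRA, hRB]
  constructor
  · ext x
    rw [Module.End.mem_eigenspace_iff, happ x, one_smul]
    exact refl_eq_one_iff K L x
  · ext x
    rw [Module.End.mem_eigenspace_iff, happ x, neg_one_smul]
    exact refl_eq_neg_one_iff K L x
end

section
/- (Effective Spectral Gap Lemma) Let A and B be matrices with orthonormal columns in ℂ^n, Π_B = BB†, R_A = 2AA† − I, R_B = 2BB† − I, and U = R_B R_A. For Θ ≥ 0, let P_Θ be the orthogonal projection onto the span of all eigenvectors of U with eigenvalue e^{iθ} satisfying |θ| ≤ Θ. Then for every vector u orthogonal to the column space of A, ‖P_Θ Π_B u‖ ≤ (Θ/2)·‖u‖. -/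
open Matrix

section Aux

local notation "⟪" x ", " y "⟫" => inner (𝕜 := ℂ) x y

private lemma stmt11_toEL_mul {n p q : ℕ} (M : Matrix (Fin n) (Fin p) ℂ)
    (N : Matrix (Fin p) (Fin q) ℂ) (x : EuclideanSpace ℂ (Fin q)) :
    toEuclideanLin (M * N) x = toEuclideanLin M (toEuclideanLin N x) := by
  simp [toEuclideanLin_apply, Matrix.mulVec_mulVec]

private lemma stmt11_pos {n : ℕ} (K : EuclideanSpace ℂ (Fin n) →ₗ[ℂ] EuclideanSpace ℂ (Fin n))
    (hK : K.IsSymmetric) (x : EuclideanSpace ℂ (Fin n))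
    (hx : ∀ (c : ℝ), c < 0 → ∀ v ∈ Module.End.eigenspace K (c : ℂ), ⟪v, x⟫ = 0) :
    0 ≤ Complex.re ⟪x, K x⟫ := by
  have hrank : Module.finrank ℂ (EuclideanSpace ℂ (Fin n)) = n := finrank_euclideanSpace_fin
  set b := hK.eigenvectorBasis hrank with hb
  set μ := hK.eigenvalues hrank with hμ
  have heig : ∀ i, K (b i) = (μ i : ℂ) • b i := fun i =>
    Module.End.mem_eigenspace_iff.mp (hK.hasEigenvector_eigenvectorBasis hrank i).1
  have hrepr : ∀ i, b.repr (K x) i = (μ i : ℂ) * b.repr x i := by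
    intro i
    rw [b.repr_apply_apply, b.repr_apply_apply, ← hK (b i) x, heig i, inner_smul_left]
    simp
  have hinner : ⟪x, K x⟫ = ∑ i, (starRingEnd ℂ) (b.repr x i) * b.repr (K x) i := by
    rw [← b.repr.inner_map_map x (K x), PiLp.inner_apply]
    simp only [RCLike.inner_apply']
  rw [hinner, Complex.re_sum]
  apply Finset.sum_nonneg
  intro i _
  rw [hrepr i]
  rcases lt_or_ge (μ i) 0 with h | h
  · have : b.repr x i = 0 := by
      rw [b.repr_apply_apply]
      exact hx (μ i) h (b i) (Module.End.mem_eigenspace_iff.mpr (heig i))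
    simp [this]
  · have : (starRingEnd ℂ) (b.repr x i) * ((μ i : ℂ) * b.repr x i)
        = (μ i : ℂ) * ((starRingEnd ℂ) (b.repr x i) * b.repr x i) := by ring
    rw [this, mul_comm ((starRingEnd ℂ) (b.repr x i)), Complex.mul_conj, ← Complex.ofReal_mul,
      Complex.ofReal_re]
    exact mul_nonneg h (Complex.normSq_nonneg _)

private lemma stmt11_core {n : ℕ} (V : EuclideanSpace ℂ (Fin n) →ₗ[ℂ] EuclideanSpace ℂ (Fin n))
    (hV : LinearMap.adjoint V * V = 1) (Θ : ℝ) (hΘ : 0 ≤ Θ) (x : EuclideanSpace ℂ (Fin n))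
    (hx : x ∈ ⨆ θ ∈ {θ : ℝ | |θ| ≤ Θ},
      Module.End.eigenspace V (Complex.exp (θ * Complex.I))) :
    ‖x - V x‖ ≤ Θ * ‖x‖ := by
  set K : EuclideanSpace ℂ (Fin n) →ₗ[ℂ] EuclideanSpace ℂ (Fin n) :=
    (((Θ^2 - 2 : ℝ) : ℂ)) • (1 : EuclideanSpace ℂ (Fin n) →ₗ[ℂ] EuclideanSpace ℂ (Fin n))
      + V + LinearMap.adjoint V with hKdef
  have hK : K.IsSymmetric := by
    rw [LinearMap.isSymmetric_iff_isSelfAdjoint]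
    unfold _root_.IsSelfAdjoint
    simp only [hKdef, star_add, star_smul, LinearMap.star_eq_adjoint, LinearMap.adjoint_adjoint,
      Complex.star_def, Complex.conj_ofReal, star_one]
    abel
  -- each relevant eigenspace of V sits in an eigenspace of K with nonnegative eigenvalue
  have hincl : ∀ θ : ℝ, Module.End.eigenspace V (Complex.exp (θ * Complex.I))
      ≤ Module.End.eigenspace K ((Θ^2 - 2 + 2 * Real.cos θ : ℝ) : ℂ) := by
    intro θ y hy
    rw [Module.End.mem_eigenspace_iff] at hy ⊢
    have h1 : LinearMap.adjoint V (V y) = y := by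
      rw [← Module.End.mul_apply, hV]; rfl
    have h2 : LinearMap.adjoint V y = Complex.exp (-θ * Complex.I) • y := by
      rw [hy, _root_.map_smul] at h1
      have := congrArg (fun z => Complex.exp (-θ * Complex.I) • z) h1
      simpa [smul_smul, ← Complex.exp_add, mul_comm] using this
    have hexp : ((Θ^2 - 2 : ℝ) : ℂ) + Complex.exp (θ * Complex.I) + Complex.exp (-θ * Complex.I)
        = ((Θ^2 - 2 + 2 * Real.cos θ : ℝ) : ℂ) := by
      push_cast
      rw [Complex.exp_mul_I, Complex.exp_mul_I]
      simp [Complex.cos_neg, Complex.sin_neg]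
      ring
    simp only [hKdef, LinearMap.add_apply, LinearMap.smul_apply, Module.End.one_apply, hy, h2]
    rw [← hexp]
    module
  have hcpos : ∀ θ : ℝ, |θ| ≤ Θ → 0 ≤ Θ^2 - 2 + 2 * Real.cos θ := by
    intro θ h
    have h1 : Real.sin (θ/2)^2 ≤ (θ/2)^2 := Real.sin_sq_le_sq
    have h2 : Real.sin (θ/2)^2 = 1/2 - Real.cos (2*(θ/2)) / 2 := Real.sin_sq_eq_half_sub (θ/2)
    rw [show 2*(θ/2) = θ by ring] at h2
    have h3 := abs_le.mp h
    nlinarith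
  -- x is orthogonal to every eigenspace of K with negative eigenvalue
  have horto : ∀ (c : ℝ), c < 0 → ∀ v ∈ Module.End.eigenspace K (c : ℂ), ⟪v, x⟫ = 0 := by
    have hle : (⨆ θ ∈ {θ : ℝ | |θ| ≤ Θ},
        Module.End.eigenspace V (Complex.exp (θ * Complex.I)))
        ≤ ⨅ (c : ℝ) (_ : c < 0), (Module.End.eigenspace K (c : ℂ))ᗮ := by
      apply iSup₂_le
      intro θ hθ
      apply le_iInf; intro c; apply le_iInf; intro hc
      intro y hy
      rw [Submodule.mem_orthogonal]
      intro v hv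
      have hne : ((c : ℝ) : ℂ) ≠ ((Θ^2 - 2 + 2 * Real.cos θ : ℝ) : ℂ) := by
        have : c < Θ^2 - 2 + 2 * Real.cos θ := lt_of_lt_of_le hc (hcpos θ hθ)
        exact_mod_cast ne_of_lt this
      exact hK.orthogonalFamily_eigenspaces hne ⟨v, hv⟩ ⟨y, hincl θ hy⟩
    intro c hc v hv
    have hx' := hle hx
    rw [Submodule.mem_iInf] at hx'
    have hx'' := hx' c
    rw [Submodule.mem_iInf] at hx''
    exact (Submodule.mem_orthogonal _ x).mp (hx'' hc) v hv
  have h0 : 0 ≤ Complex.re ⟪x, K x⟫ := stmt11_pos K hK x horto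
  -- rewrite re ⟪x, K x⟫
  have hVx : ‖V x‖ = ‖x‖ := by
    rw [@norm_eq_sqrt_re_inner ℂ, @norm_eq_sqrt_re_inner ℂ (x := x)]
    congr 1
    rw [← LinearMap.adjoint_inner_right, ← Module.End.mul_apply, hV, Module.End.one_apply]
  have hre : Complex.re ⟪x, K x⟫
      = (Θ^2 - 2) * ‖x‖^2 + 2 * Complex.re ⟪x, V x⟫ := by
    simp only [hKdef, LinearMap.add_apply, LinearMap.smul_apply, Module.End.one_apply,
      inner_add_right, inner_smul_right]
    rw [LinearMap.adjoint_inner_right]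
    have h1 : ⟪V x, x⟫ = (starRingEnd ℂ) ⟪x, V x⟫ := (inner_conj_symm (V x) x).symm
    have h2 : Complex.re (((Θ^2 - 2 : ℝ) : ℂ) * ⟪x, x⟫) = (Θ^2 - 2) * ‖x‖^2 := by
      rw [Complex.mul_re, Complex.ofReal_re, Complex.ofReal_im]
      have := @inner_self_eq_norm_sq ℂ _ _ _ _ x
      simp only [RCLike.re_to_complex] at this
      rw [this]
      ring
    simp only [Complex.add_re, h1, Complex.conj_re, h2]
    ring
  have hsq : ‖x - V x‖^2 ≤ Θ^2 * ‖x‖^2 := by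
    have hns := @norm_sub_sq ℂ _ _ _ _ x (V x)
    simp only [RCLike.re_to_complex] at hns
    rw [hVx] at hns
    nlinarith [hns, hre, h0, hVx]
  nlinarith [hsq, norm_nonneg (x - V x), norm_nonneg x, mul_nonneg hΘ (norm_nonneg x)]

end Aux

/-- Effective Spectral Gap Lemma: Let `A`, `B` have orthonormal columns,
`U = (2BBᴴ − I)(2AAᴴ − I)`, and for `Θ ≥ 0` let `P_Θ` be the orthogonal projection onto
the span of the eigenvectors of `U` with eigenvalue `e^{iθ}`, `|θ| ≤ Θ`.  Then for every
`u` orthogonal to the column space of `A`, `‖P_Θ Π_B u‖ ≤ (Θ/2) ‖u‖`. -/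
theorem stmt_11 {n k m : ℕ} (A : Matrix (Fin n) (Fin k) ℂ) (B : Matrix (Fin n) (Fin m) ℂ)
    (hA : Aᴴ * A = 1) (hB : Bᴴ * B = 1) (Θ : ℝ) (hΘ : 0 ≤ Θ)
    (S : Submodule ℂ (EuclideanSpace ℂ (Fin n)))
    (hS : S = ⨆ θ ∈ {θ : ℝ | |θ| ≤ Θ},
      Module.End.eigenspace
        (Matrix.toEuclideanLin
          (((2 : ℂ) • (B * Bᴴ) - 1) * ((2 : ℂ) • (A * Aᴴ) - 1)))
        (Complex.exp (θ * Complex.I)))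
    (u : EuclideanSpace ℂ (Fin n))
    (hu : u ∈ (LinearMap.range (Matrix.toEuclideanLin A))ᗮ) :
    ‖(Submodule.orthogonalProjection S (Matrix.toEuclideanLin (B * Bᴴ) u) :
        EuclideanSpace ℂ (Fin n))‖ ≤ (Θ / 2) * ‖u‖ := by
  have hsq : ∀ {p : ℕ} (P : Matrix (Fin n) (Fin p) ℂ), Pᴴ * P = 1 →
      ((2:ℂ) • (P * Pᴴ) - 1) * ((2:ℂ) • (P * Pᴴ) - 1) = 1 := by
    intro p P hP
    have hPP : (P * Pᴴ) * (P * Pᴴ) = P * Pᴴ := by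
      rw [Matrix.mul_assoc, ← Matrix.mul_assoc Pᴴ, hP, Matrix.one_mul]
    have hexp : ((2:ℂ) • (P * Pᴴ) - 1) * ((2:ℂ) • (P * Pᴴ) - 1)
        = (4:ℂ) • ((P * Pᴴ) * (P * Pᴴ)) - (4:ℂ) • (P * Pᴴ) + 1 := by
      rw [sub_mul, mul_sub, mul_sub, smul_mul_assoc, mul_smul_comm, smul_smul, mul_one, one_mul]
      norm_num
      module
    rw [hexp, hPP]
    module
  set M : Matrix (Fin n) (Fin n) ℂ :=
    ((2 : ℂ) • (B * Bᴴ) - 1) * ((2 : ℂ) • (A * Aᴴ) - 1) with hM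
  set V := Matrix.toEuclideanLin M with hVdef
  have hRBH : ((2:ℂ) • (B * Bᴴ) - 1)ᴴ = (2:ℂ) • (B * Bᴴ) - 1 := by
    simp [Matrix.conjTranspose_sub, Matrix.conjTranspose_smul, Matrix.conjTranspose_mul,
      Matrix.conjTranspose_one, Matrix.conjTranspose_conjTranspose]
  have hRAH : ((2:ℂ) • (A * Aᴴ) - 1)ᴴ = (2:ℂ) • (A * Aᴴ) - 1 := by
    simp [Matrix.conjTranspose_sub, Matrix.conjTranspose_smul, Matrix.conjTranspose_mul,
      Matrix.conjTranspose_one, Matrix.conjTranspose_conjTranspose]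
  have hMH : Mᴴ = ((2:ℂ) • (A * Aᴴ) - 1) * ((2:ℂ) • (B * Bᴴ) - 1) := by
    rw [hM, Matrix.conjTranspose_mul, hRAH, hRBH]
  have hMuni : Mᴴ * M = 1 := by
    rw [hMH, hM, Matrix.mul_assoc, ← Matrix.mul_assoc ((2:ℂ) • (B * Bᴴ) - 1),
      hsq B hB, Matrix.one_mul, hsq A hA]
  have hVuni : LinearMap.adjoint V * V = 1 := by
    apply LinearMap.ext; intro z
    rw [Module.End.mul_apply, hVdef, ← Matrix.toEuclideanLin_conjTranspose_eq_adjoint,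
      ← stmt11_toEL_mul, hMuni]
    simp [Matrix.toEuclideanLin_apply]
  have hAu : Matrix.toEuclideanLin Aᴴ u = 0 := by
    have h := (Submodule.mem_orthogonal _ u).mp hu
    rw [← @inner_self_eq_zero ℂ, Matrix.toEuclideanLin_conjTranspose_eq_adjoint,
      LinearMap.adjoint_inner_right]
    exact h _ ⟨_, rfl⟩
  set w := Matrix.toEuclideanLin (B * Bᴴ) u with hw
  have hkey : u - V u = (2:ℂ) • w := by
    have h1 : Matrix.toEuclideanLin ((2:ℂ) • (A * Aᴴ) - 1) u = -u := by
      rw [map_sub, _root_.map_smul]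
      simp only [LinearMap.sub_apply, LinearMap.smul_apply]
      rw [stmt11_toEL_mul, hAu]
      simp [Matrix.toEuclideanLin_apply]
    have h2 : Matrix.toEuclideanLin ((2:ℂ) • (B * Bᴴ) - 1) (-u) = u - (2:ℂ) • w := by
      rw [map_neg, map_sub, _root_.map_smul]
      simp only [LinearMap.sub_apply, LinearMap.smul_apply, LinearMap.neg_apply]
      have : Matrix.toEuclideanLin (1 : Matrix (Fin n) (Fin n) ℂ) u = u := by
        simp [Matrix.toEuclideanLin_apply]
      rw [this, hw]
      module
    have h3 : V u = u - (2:ℂ) • w := by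
      rw [hVdef, hM, stmt11_toEL_mul, h1, h2]
    rw [h3]
    module
  set y : EuclideanSpace ℂ (Fin n) := ↑(Submodule.orthogonalProjection S w) with hy
  have hyS : y ∈ S := (Submodule.orthogonalProjection S w).2
  have hcore : ‖y - V y‖ ≤ Θ * ‖y‖ := by
    apply stmt11_core V hVuni Θ hΘ y
    rw [← hS]; exact hyS
  have hyw : (inner ℂ y w : ℂ) = inner ℂ y y := by
    have hperp : w - y ∈ Sᗮ := S.sub_starProjection_mem_orthogonal w
    have h0 : (inner ℂ y (w - y) : ℂ) = 0 := (Submodule.mem_orthogonal S _).mp hperp y hyS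
    have : w = y + (w - y) := by abel
    rw [this, inner_add_right, h0, add_zero]
  have hinu : (2:ℂ) * inner ℂ y w = inner ℂ (y - LinearMap.adjoint V y) u := by
    calc (2:ℂ) * inner ℂ y w = inner ℂ y ((2:ℂ) • w) := (inner_smul_right _ _ _).symm
      _ = (inner ℂ y (u - V u) : ℂ) := by rw [← hkey]
      _ = (inner ℂ y u : ℂ) - inner ℂ (LinearMap.adjoint V y) u := by
          rw [inner_sub_right, LinearMap.adjoint_inner_left]
      _ = inner ℂ (y - LinearMap.adjoint V y) u := (inner_sub_left _ _ _).symm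
  have hadj_norm : ‖y - LinearMap.adjoint V y‖ = ‖y - V y‖ := by
    have h1 : y - LinearMap.adjoint V y = LinearMap.adjoint V (V y - y) := by
      rw [map_sub, ← Module.End.mul_apply, hVuni, Module.End.one_apply]
    have hVV : V * LinearMap.adjoint V = 1 := mul_eq_one_comm.mp hVuni
    have h2 : ‖LinearMap.adjoint V (V y - y)‖ = ‖V y - y‖ := by
      rw [@norm_eq_sqrt_re_inner ℂ, @norm_eq_sqrt_re_inner ℂ (x := V y - y)]
      congr 1
      rw [LinearMap.adjoint_inner_left, ← Module.End.mul_apply, hVV, Module.End.one_apply]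
    rw [h1, h2, norm_sub_rev]
  have hy2 : ‖y‖^2 = Complex.re (inner ℂ y w) := by
    rw [hyw]
    have := @inner_self_eq_norm_sq ℂ _ _ _ _ y
    simp only [RCLike.re_to_complex] at this
    rw [this]
  have hb : Complex.re (inner ℂ (y - LinearMap.adjoint V y) u : ℂ)
      ≤ ‖y - LinearMap.adjoint V y‖ * ‖u‖ := by
    have := @re_inner_le_norm ℂ _ _ _ _ (y - LinearMap.adjoint V y) u
    simpa only [RCLike.re_to_complex] using this
  have hchain : 2 * ‖y‖^2 ≤ Θ * ‖y‖ * ‖u‖ := by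
    have e1 : 2 * ‖y‖^2 = Complex.re ((2:ℂ) * inner ℂ y w) := by
      rw [Complex.mul_re]
      simp [hy2]
    rw [e1, hinu]
    calc Complex.re (inner ℂ (y - LinearMap.adjoint V y) u : ℂ)
        ≤ ‖y - LinearMap.adjoint V y‖ * ‖u‖ := hb
      _ = ‖y - V y‖ * ‖u‖ := by rw [hadj_norm]
      _ ≤ (Θ * ‖y‖) * ‖u‖ := by
          apply mul_le_mul_of_nonneg_right hcore (norm_nonneg u)
      _ = Θ * ‖y‖ * ‖u‖ := by ring
  by_cases hy0 : ‖y‖ = 0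
  · rw [hy0]
    positivity
  · have hypos : 0 < ‖y‖ := lt_of_le_of_ne (norm_nonneg y) (Ne.symm hy0)
    have h1 : (2 * ‖y‖) * ‖y‖ ≤ (Θ * ‖u‖) * ‖y‖ := by ring_nf; ring_nf at hchain; linarith
    have h2 : 2 * ‖y‖ ≤ Θ * ‖u‖ := le_of_mul_le_mul_right h1 hypos
    linarith
end

section
/- For a connected graph G with m edges, and vertices s, t, the hitting time from s to t of the simple random walk is at most 2·m·R_{st}, where R_{st} is the effective resistance between s and t when each edge is a unit resistor. -/
open Finset

set_option linter.unusedSectionVars false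

section aux
variable {V : Type*} [Fintype V] [DecidableEq V] (G : SimpleGraph V) [DecidableRel G.Adj]

noncomputable def lapL : (V → ℝ) →ₗ[ℝ] (V → ℝ) where
  toFun x := fun v => ∑ u, (if G.Adj v u then x v - x u else 0)
  map_add' x y := by
    funext v
    dsimp only [Pi.add_apply]
    rw [← Finset.sum_add_distrib]
    refine Finset.sum_congr rfl fun u _ => ?_
    by_cases hh : G.Adj v u <;> simp [hh]
    ring
  map_smul' c x := by
    funext v
    dsimp only [RingHom.id_apply, Pi.smul_apply, smul_eq_mul]
    rw [Finset.mul_sum]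
    refine Finset.sum_congr rfl fun u _ => ?_
    by_cases hh : G.Adj v u <;> simp [hh]
    ring

lemma lapL_def (x : V → ℝ) (v : V) :
    lapL G x v = ∑ u, (if G.Adj v u then x v - x u else 0) := rfl

lemma lapL_apply (x : V → ℝ) (v : V) :
    lapL G x v = (G.degree v : ℝ) * x v - ∑ u ∈ G.neighborFinset v, x u := by
  rw [lapL_def]
  have h1 : (∑ u, if G.Adj v u then x v - x u else 0)
      = (∑ u, if G.Adj v u then x v else 0) - (∑ u, if G.Adj v u then x u else 0) := by
    rw [← Finset.sum_sub_distrib]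
    refine Finset.sum_congr rfl fun u _ => ?_
    by_cases hh : G.Adj v u <;> simp [hh]
  rw [h1]
  congr 1
  · rw [← Finset.sum_filter, ← SimpleGraph.neighborFinset_eq_filter, Finset.sum_const,
      nsmul_eq_mul, G.card_neighborFinset_eq_degree]
  · rw [← Finset.sum_filter, ← SimpleGraph.neighborFinset_eq_filter]

lemma adj_swap (F : V → V → ℝ) :
    (∑ u, ∑ v, if G.Adj u v then F u v else 0)
      = ∑ u, ∑ v, if G.Adj u v then F v u else 0 := by
  rw [Finset.sum_comm]
  refine Finset.sum_congr rfl fun u _ => Finset.sum_congr rfl fun v _ => ?_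
  by_cases hh : G.Adj u v
  · rw [if_pos hh.symm, if_pos hh]
  · rw [if_neg (fun h' => hh h'.symm), if_neg hh]

lemma sum_lapL (x : V → ℝ) : ∑ v, lapL G x v = 0 := by
  have h0 : (∑ v, ∑ u, if G.Adj v u then x v - x u else 0)
      = ∑ v, ∑ u, if G.Adj v u then x u - x v else 0 := adj_swap G _
  have h1 : (∑ v, ∑ u, if G.Adj v u then x u - x v else 0)
      = - ∑ v, ∑ u, if G.Adj v u then x v - x u else 0 := by
    rw [← Finset.sum_neg_distrib]
    refine Finset.sum_congr rfl fun v _ => ?_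
    rw [← Finset.sum_neg_distrib]
    refine Finset.sum_congr rfl fun u _ => ?_
    by_cases hh : G.Adj v u <;> simp [hh]
  simp only [lapL_def]
  linarith [h0.trans h1]

lemma lap_energy (x : V → ℝ) :
    ∑ v, ∑ u, (if G.Adj v u then (x v - x u)^2 else 0) = 2 * ∑ v, x v * lapL G x v := by
  have hA : ∀ v, x v * lapL G x v = ∑ u, (if G.Adj v u then (x v - x u) * x v else 0) := by
    intro v
    rw [lapL_def, Finset.mul_sum]
    refine Finset.sum_congr rfl fun u _ => ?_
    by_cases hh : G.Adj v u <;> simp [hh] ; ring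
  have hB : (∑ v, ∑ u, if G.Adj v u then (x v - x u) * x u else 0)
      = - ∑ v, ∑ u, (if G.Adj v u then (x v - x u) * x v else 0) := by
    rw [adj_swap G (fun v u => (x v - x u) * x u), ← Finset.sum_neg_distrib]
    refine Finset.sum_congr rfl fun v _ => ?_
    rw [← Finset.sum_neg_distrib]
    refine Finset.sum_congr rfl fun u _ => ?_
    by_cases hh : G.Adj v u <;> simp [hh] ; ring
  have hsplit : (∑ v, ∑ u, (if G.Adj v u then (x v - x u)^2 else 0))
      = (∑ v, ∑ u, (if G.Adj v u then (x v - x u) * x v else 0))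
        - ∑ v, ∑ u, (if G.Adj v u then (x v - x u) * x u else 0) := by
    rw [← Finset.sum_sub_distrib]
    refine Finset.sum_congr rfl fun v _ => ?_
    rw [← Finset.sum_sub_distrib]
    refine Finset.sum_congr rfl fun u _ => ?_
    by_cases hh : G.Adj v u <;> simp [hh] ; ring
  rw [hsplit, hB]
  simp only [hA]
  ring


lemma const_eq_of_adj_eq (hG : G.Connected) {x : V → ℝ}
    (hx : ∀ u v, G.Adj u v → x u = x v) (u v : V) : x u = x v := by
  obtain ⟨p⟩ := hG.preconnected u v
  induction p with
  | nil => rfl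
  | cons ha p ih => exact (hx _ _ ha).trans ih

lemma deg_pos (hG : G.Connected) [Nontrivial V] (v : V) : 0 < G.degree v := by
  rw [G.degree_pos_iff_exists_adj]
  obtain ⟨w, hw⟩ := exists_ne v
  obtain ⟨p⟩ := hG.preconnected v w
  cases p with
  | nil => exact absurd rfl hw.symm
  | cons ha _ => exact ⟨_, ha⟩

noncomputable def sumF (V : Type*) [Fintype V] : (V → ℝ) →ₗ[ℝ] ℝ where
  toFun x := ∑ v, x v
  map_add' x y := by simp [Finset.sum_add_distrib]
  map_smul' c x := by simp [Finset.mul_sum]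

lemma sumF_surj [Nonempty V] : Function.Surjective (sumF V) := by
  intro c
  refine ⟨fun _ => c / (Fintype.card V : ℝ), ?_⟩
  have hc : (Fintype.card V : ℝ) ≠ 0 := by exact_mod_cast Fintype.card_ne_zero
  show ∑ _v : V, c / (Fintype.card V : ℝ) = c
  rw [Finset.sum_const, nsmul_eq_mul]
  field_simp
  rw [Finset.card_univ]; ring

lemma exists_potential (hG : G.Connected) {s t : V} (hst : s ≠ t) :
    ∃ φ : V → ℝ, lapL G φ
      = fun v => (if v = s then (1:ℝ) else 0) - (if v = t then 1 else 0) := by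
  haveI : Nontrivial V := ⟨s, t, hst⟩
  set one : V → ℝ := fun _ => 1 with hone
  have hone0 : one ≠ 0 := by
    intro hc
    have := congrFun hc s
    simp [hone] at this
  have hker : LinearMap.ker (lapL G) = Submodule.span ℝ {one} := by
    apply le_antisymm
    · intro x hx
      have hx0 : lapL G x = 0 := hx
      have hE : ∑ v, ∑ u, (if G.Adj v u then (x v - x u)^2 else 0) = 0 := by
        rw [lap_energy, hx0]
        simp
      have hterm : ∀ v u : V, (if G.Adj v u then (x v - x u)^2 else 0) = 0 := by
        have h1 := (Finset.sum_eq_zero_iff_of_nonneg (fun v _ =>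
          Finset.sum_nonneg (fun u _ => by positivity))).mp hE
        intro v u
        have h2 := (Finset.sum_eq_zero_iff_of_nonneg (fun u _ => by positivity)).mp
          (h1 v (mem_univ v))
        exact h2 u (mem_univ u)
      have hadj : ∀ u v, G.Adj u v → x u = x v := by
        intro u v huv
        have := hterm u v
        rw [if_pos huv] at this
        have := pow_eq_zero_iff (n := 2) (by norm_num) |>.mp this
        linarith
      have hxc : x = x s • one := by
        funext v
        simp only [Pi.smul_apply, hone, smul_eq_mul, mul_one]
        exact const_eq_of_adj_eq G hG hadj v s
      rw [hxc]
      exact Submodule.smul_mem _ _ (Submodule.mem_span_singleton_self one)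
    · rw [Submodule.span_le, Set.singleton_subset_iff]
      have : lapL G one = 0 := by
        funext v
        rw [lapL_def]
        apply Finset.sum_eq_zero
        intro u _
        simp [hone]
      exact (LinearMap.mem_ker).mpr this
  have hrange : LinearMap.range (lapL G) = LinearMap.ker (sumF V) := by
    apply Submodule.eq_of_le_of_finrank_eq
    · rintro y ⟨x, rfl⟩
      exact (LinearMap.mem_ker).mpr (sum_lapL G x)
    · have h1 := LinearMap.finrank_range_add_finrank_ker (lapL G)
      have h2 := LinearMap.finrank_range_add_finrank_ker (sumF V)
      have hkr : Module.finrank ℝ (LinearMap.ker (lapL G)) = 1 := by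
        rw [hker]
        exact finrank_span_singleton hone0
      have hr2 : Module.finrank ℝ (LinearMap.range (sumF V)) = 1 := by
        rw [LinearMap.range_eq_top.mpr sumF_surj, finrank_top, Module.finrank_self]
      rw [hkr] at h1
      rw [hr2] at h2
      omega
  have hδ : (fun v => (if v = s then (1:ℝ) else 0) - (if v = t then 1 else 0))
      ∈ LinearMap.ker (sumF V) := by
    apply (LinearMap.mem_ker).mpr
    show ∑ v, ((if v = s then (1:ℝ) else 0) - (if v = t then 1 else 0)) = 0
    rw [Finset.sum_sub_distrib]
    rw [Finset.sum_ite_eq' univ s (fun _ => (1:ℝ)), Finset.sum_ite_eq' univ t (fun _ => (1:ℝ))]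
    simp
  rw [← hrange] at hδ
  exact hδ


lemma flow_pairing (f : V → V → ℝ) (hanti : ∀ u v, f u v = - f v u) (y : V → ℝ) :
    ∑ u, ∑ v, f u v * (y u - y v) = 2 * ∑ u, y u * (∑ v, f u v) := by
  have h1 : ∑ u, ∑ v, f u v * y u = ∑ u, y u * ∑ v, f u v := by
    refine Finset.sum_congr rfl fun u _ => ?_
    rw [Finset.mul_sum]
    exact Finset.sum_congr rfl fun v _ => by ring
  have h2 : ∑ u, ∑ v, f u v * y v = - ∑ u, y u * ∑ v, f u v := by
    rw [Finset.sum_comm, ← Finset.sum_neg_distrib]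
    refine Finset.sum_congr rfl fun v _ => ?_
    have e1 : ∑ u, f u v * y v = y v * ∑ u, f u v := by
      rw [Finset.mul_sum]
      exact Finset.sum_congr rfl fun u _ => by ring
    have e2 : ∑ u, f u v = - ∑ u, f v u := by
      rw [← Finset.sum_neg_distrib]
      exact Finset.sum_congr rfl fun u _ => hanti u v
    rw [e1, e2, mul_neg]
  have hsplit : ∑ u, ∑ v, f u v * (y u - y v)
      = (∑ u, ∑ v, f u v * y u) - ∑ u, ∑ v, f u v * y v := by
    rw [← Finset.sum_sub_distrib]
    refine Finset.sum_congr rfl fun u _ => ?_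
    rw [← Finset.sum_sub_distrib]
    exact Finset.sum_congr rfl fun v _ => by ring
  rw [hsplit, h1, h2]
  ring

lemma total_sum_zero (f : V → V → ℝ) (hanti : ∀ u v, f u v = - f v u) :
    ∑ u, ∑ v, f u v = 0 := by
  have h0 : ∑ u, ∑ v, f u v = - ∑ u, ∑ v, f u v := by
    nth_rewrite 1 [Finset.sum_comm]
    rw [← Finset.sum_neg_distrib]
    refine Finset.sum_congr rfl fun v _ => ?_
    rw [← Finset.sum_neg_distrib]
    exact Finset.sum_congr rfl fun u _ => hanti u v
  linarith

lemma rowsum_t {s t : V} (hst : s ≠ t) (f : V → V → ℝ)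
    (hanti : ∀ u v, f u v = - f v u)
    (hcons : ∀ v, v ≠ s → v ≠ t → ∑ u, f v u = 0)
    (hs : ∑ u, f s u = 1) :
    ∑ u, f t u = -1 := by
  have htot := total_sum_zero f hanti
  have e1 : ∑ u, ∑ v, f u v = f s (s) * 0 + (∑ u, ∑ v, f u v) := by ring
  have hsplit1 : (∑ u, ∑ v, f u v)
      = (∑ v, f s v) + ∑ u ∈ univ.erase s, ∑ v, f u v := by
    exact (Finset.add_sum_erase univ (fun u => ∑ v, f u v) (mem_univ s)).symm
  have hsplit2 : (∑ u ∈ univ.erase s, ∑ v, f u v)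
      = (∑ v, f t v) + ∑ u ∈ (univ.erase s).erase t, ∑ v, f u v := by
    exact (Finset.add_sum_erase _ (fun u => ∑ v, f u v)
      (Finset.mem_erase.mpr ⟨Ne.symm hst, mem_univ t⟩)).symm
  have hrest : (∑ u ∈ (univ.erase s).erase t, ∑ v, f u v) = 0 := by
    apply Finset.sum_eq_zero
    intro v hv
    rw [Finset.mem_erase, Finset.mem_erase] at hv
    exact hcons v hv.2.1 hv.1
  rw [hsplit1, hsplit2, hrest, hs] at htot
  linarith


lemma sum_two_support {s t : V} (hst : s ≠ t) (g : V → ℝ)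
    (hz : ∀ v, v ≠ s → v ≠ t → g v = 0) :
    ∑ v, g v = g s + g t := by
  have e1 := Finset.add_sum_erase univ g (mem_univ s)
  have e2 := Finset.add_sum_erase (univ.erase s) g
    (Finset.mem_erase.mpr ⟨Ne.symm hst, mem_univ t⟩)
  have hrest : (∑ u ∈ (univ.erase s).erase t, g u) = 0 := by
    apply Finset.sum_eq_zero
    intro v hv
    rw [Finset.mem_erase, Finset.mem_erase] at hv
    exact hz v hv.2.1 hv.1
  rw [hrest, add_zero] at e2
  linarith


end aux




/-- `f` is a unit flow from `s` to `t` in `G`: antisymmetric, supported on edges, with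
zero net flow at every internal vertex and unit net flow out of `s`. -/
def IsUnitFlow {V : Type*} [Fintype V] (G : SimpleGraph V) (s t : V)
    (f : V → V → ℝ) : Prop :=
  (∀ u v, f u v = -f v u) ∧
  (∀ u v, f u v ≠ 0 → G.Adj u v) ∧
  (∀ v, v ≠ s → v ≠ t → ∑ u, f v u = 0) ∧
  (∑ u, f s u = 1)

/-- The energy of a flow: the sum over edges of the square of the flow (each ordered
pair counted once). -/
noncomputable def flowEnergy {V : Type*} [Fintype V] (f : V → V → ℝ) : ℝ :=
  (∑ u, ∑ v, (f u v) ^ 2) / 2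

/-- For a connected graph `G` with `m` edges and vertices `s`, `t`, the
hitting time from `s` to `t` of the simple random walk (the function `h` with `h t = 0`
and `h v = 1 + (1/deg v) Σ_{u ∼ v} h u` for `v ≠ t`) is at most `2 m R_{st}`, where
`R_{st}` is the effective resistance: the least energy of a unit flow from `s` to `t`. -/
theorem stmt_19 {V : Type*} [Fintype V] [DecidableEq V]
    (G : SimpleGraph V) [DecidableRel G.Adj] (hG : G.Connected) (s t : V)
    (h : V → ℝ) (hht : h t = 0)
    (hrec : ∀ v, v ≠ t →
      h v = 1 + (∑ u ∈ G.neighborFinset v, h u) / (G.degree v)) :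
    h s ≤ 2 * (G.edgeFinset.card : ℝ) *
      sInf {E : ℝ | ∃ f, IsUnitFlow G s t f ∧ E = flowEnergy f} := by
  by_cases hst : s = t
  · subst hst
    have hempty : {E : ℝ | ∃ f, IsUnitFlow G s s f ∧ E = flowEnergy f} = ∅ := by
      ext E
      simp only [Set.mem_setOf_eq, Set.mem_empty_iff_false, iff_false, not_exists]
      rintro f ⟨⟨hanti, hsupp, hcons, hs1⟩, _⟩
      have htot := total_sum_zero f hanti
      have hone : ∑ u, ∑ v, f u v = 1 := by
        have e1 := Finset.add_sum_erase Finset.univ (fun u => ∑ v, f u v)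
          (Finset.mem_univ s)
        have hrest : (∑ u ∈ Finset.univ.erase s, ∑ v, f u v) = 0 := by
          apply Finset.sum_eq_zero
          intro v hv
          rw [Finset.mem_erase] at hv
          exact hcons v hv.1 hv.1
        rw [hrest, add_zero] at e1
        rw [← e1]
        simpa using hs1
      rw [htot] at hone
      norm_num at hone
    rw [hempty, Real.sInf_empty, mul_zero, hht]
  · haveI : Nontrivial V := ⟨s, t, hst⟩
    obtain ⟨φ, hφ⟩ := exists_potential G hG hst
    set M : ℝ := (G.edgeFinset.card : ℝ) with hM
    have hdegsum : ∑ v, (G.degree v : ℝ) = 2 * M := by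
      rw [hM]
      have := G.sum_degrees_eq_twice_card_edges
      exact_mod_cast congrArg (fun n : ℕ => (n : ℝ)) this
    have hφs : lapL G φ s = 1 := by rw [hφ]; simp [hst]
    have hφt : lapL G φ t = -1 := by rw [hφ]; simp [Ne.symm hst]
    have hφo : ∀ v, v ≠ s → v ≠ t → lapL G φ v = 0 := by
      intro v h1 h2; rw [hφ]; simp [h1, h2]
    set θ : V → V → ℝ := fun u v => if G.Adj u v then φ u - φ v else 0 with hθ
    have hθanti : ∀ u v, θ u v = - θ v u := by
      intro u v
      by_cases hh : G.Adj u v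
      · rw [hθ]; simp only; rw [if_pos hh, if_pos hh.symm]; ring
      · rw [hθ]; simp only; rw [if_neg hh, if_neg (fun h' => hh h'.symm)]; ring
    have hθrow : ∀ u, ∑ v, θ u v = lapL G φ u := fun u => (lapL_def G φ u).symm
    set R : ℝ := φ s - φ t with hR
    have hθsq : ∀ u v, θ u v ^ 2 = θ u v * (φ u - φ v) := by
      intro u v
      by_cases hh : G.Adj u v <;> simp [hθ, hh] <;> ring
    have hsum_lap : ∑ u, φ u * lapL G φ u = R := by
      rw [sum_two_support hst (fun u => φ u * lapL G φ u)
        (fun v h1 h2 => by show φ v * lapL G φ v = 0; rw [hφo v h1 h2]; ring),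
        hφs, hφt, hR]
      ring
    have hθE : ∑ u, ∑ v, θ u v ^ 2 = 2 * R := by
      calc ∑ u, ∑ v, θ u v ^ 2 = ∑ u, ∑ v, θ u v * (φ u - φ v) :=
            Finset.sum_congr rfl fun u _ => Finset.sum_congr rfl fun v _ => hθsq u v
        _ = 2 * ∑ u, φ u * (∑ v, θ u v) := flow_pairing θ hθanti φ
        _ = 2 * R := by
            rw [show (∑ u, φ u * (∑ v, θ u v)) = ∑ u, φ u * lapL G φ u from
              Finset.sum_congr rfl fun u _ => by rw [hθrow u], hsum_lap]
    have hRnonneg : 0 ≤ R := by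
      have : 0 ≤ ∑ u, ∑ v, θ u v ^ 2 :=
        Finset.sum_nonneg fun u _ => Finset.sum_nonneg fun v _ => by positivity
      linarith [hθE]
    have hθflow : IsUnitFlow G s t θ := by
      refine ⟨hθanti, ?_, ?_, ?_⟩
      · intro u v hne
        by_contra hh
        apply hne
        rw [hθ]; simp only; rw [if_neg hh]
      · intro v h1 h2
        rw [hθrow v, hφo v h1 h2]
      · rw [hθrow s, hφs]
    have hθenergy : flowEnergy θ = R := by
      rw [flowEnergy, hθE]; ring
    -- lower bound for all energies
    have hlower : ∀ E ∈ {E : ℝ | ∃ f, IsUnitFlow G s t f ∧ E = flowEnergy f}, R ≤ E := by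
      rintro E ⟨f, ⟨hanti, hsupp, hcons, hs1⟩, rfl⟩
      have hEfnn : (0:ℝ) ≤ flowEnergy f := by
        rw [flowEnergy]
        have : 0 ≤ ∑ u, ∑ v, f u v ^ 2 :=
          Finset.sum_nonneg fun u _ => Finset.sum_nonneg fun v _ => by positivity
        linarith
      rcases eq_or_lt_of_le hRnonneg with hR0 | hRpos
      · linarith
      have hrt : ∑ u, f t u = -1 := rowsum_t hst f hanti hcons hs1
      have hpair : ∑ u, ∑ v, f u v * (φ u - φ v) = 2 * R := by
        rw [flow_pairing f hanti φ]
        congr 1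
        rw [sum_two_support hst (fun u => φ u * ∑ v, f u v)
          (fun v h1 h2 => by show φ v * ∑ u, f v u = 0; rw [hcons v h1 h2]; ring),
          hs1, hrt, hR]
        ring
      have hfθ : ∑ u, ∑ v, f u v * θ u v = 2 * R := by
        rw [← hpair]
        refine Finset.sum_congr rfl fun u _ => Finset.sum_congr rfl fun v _ => ?_
        by_cases hh : G.Adj u v
        · rw [hθ]; simp only; rw [if_pos hh]
        · have hf0 : f u v = 0 := by
            by_contra hc
            exact hh (hsupp u v hc)
          rw [hf0]; ring
      have hCS := Finset.sum_mul_sq_le_sq_mul_sq Finset.univ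
        (fun p : V × V => f p.1 p.2) (fun p : V × V => θ p.1 p.2)
      rw [Fintype.sum_prod_type, Fintype.sum_prod_type, Fintype.sum_prod_type] at hCS
      simp only at hCS
      rw [hfθ, hθE] at hCS
      have hEf : ∑ u, ∑ v, f u v ^ 2 = 2 * flowEnergy f := by
        rw [flowEnergy]; ring
      rw [hEf] at hCS
      nlinarith
    -- min principle: h s ≤ 2 M R
    have hlaph : ∀ v, v ≠ t → lapL G h v = (G.degree v : ℝ) := by
      intro v hv
      have hd : (0:ℝ) < (G.degree v : ℝ) := by exact_mod_cast deg_pos G hG v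
      rw [lapL_apply, hrec v hv]
      field_simp
      ring
    have hlapht : lapL G h t = (G.degree t : ℝ) - 2 * M := by
      have h0 := sum_lapL G h
      have e1 := Finset.add_sum_erase Finset.univ (lapL G h) (Finset.mem_univ t)
      have e2 : (∑ v ∈ Finset.univ.erase t, lapL G h v)
          = ∑ v ∈ Finset.univ.erase t, (G.degree v : ℝ) := by
        refine Finset.sum_congr rfl fun v hv => ?_
        rw [Finset.mem_erase] at hv
        exact hlaph v hv.1
      have e3 := Finset.add_sum_erase Finset.univ (fun v => (G.degree v : ℝ))
        (Finset.mem_univ t)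
      rw [hdegsum] at e3
      rw [h0] at e1
      rw [e2] at e1
      linarith
    have hlaph2 : ∀ v, v ≠ s →
        lapL G (h - (2 * M) • φ) v = (G.degree v : ℝ) := by
      intro v hv
      have hlin : lapL G (h - (2 * M) • φ) v
          = lapL G h v - (2 * M) * lapL G φ v := by
        rw [map_sub, map_smul]
        simp
      by_cases hvt : v = t
      · subst hvt
        rw [hlin, hlapht, hφt]
        ring
      · rw [hlin, hlaph v hvt, hφo v hv hvt]
        ring
    set h2 : V → ℝ := h - (2 * M) • φ with hh2
    obtain ⟨v₀, _, hmin⟩ := Finset.exists_min_image Finset.univ h2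
      ⟨s, Finset.mem_univ s⟩
    have hv0 : v₀ = s := by
      by_contra hv0
      have hl := hlaph2 v₀ hv0
      rw [lapL_apply] at hl
      have hd : (0:ℝ) < (G.degree v₀ : ℝ) := by exact_mod_cast deg_pos G hG v₀
      have hsum : (G.degree v₀ : ℝ) * h2 v₀ ≤ ∑ u ∈ G.neighborFinset v₀, h2 u := by
        calc (G.degree v₀ : ℝ) * h2 v₀
            = ∑ _u ∈ G.neighborFinset v₀, h2 v₀ := by
              rw [Finset.sum_const, nsmul_eq_mul, G.card_neighborFinset_eq_degree]
          _ ≤ ∑ u ∈ G.neighborFinset v₀, h2 u :=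
              Finset.sum_le_sum fun u _ => hmin u (Finset.mem_univ u)
      linarith
    have hts : h2 s ≤ h2 t := hv0 ▸ hmin t (Finset.mem_univ t)
    have hfinal : h s ≤ 2 * M * R := by
      have e1 : h2 s = h s - 2 * M * φ s := by
        rw [hh2]; simp only [Pi.sub_apply, Pi.smul_apply, smul_eq_mul]
      have e2 : h2 t = h t - 2 * M * φ t := by
        rw [hh2]; simp only [Pi.sub_apply, Pi.smul_apply, smul_eq_mul]
      have e3 : 2 * M * R = 2 * M * φ s - 2 * M * φ t := by rw [hR]; ring
      rw [e1, e2, hht] at hts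
      linarith
    have hlb : R ≤ sInf {E : ℝ | ∃ f, IsUnitFlow G s t f ∧ E = flowEnergy f} :=
      le_csInf ⟨flowEnergy θ, θ, hθflow, rfl⟩ hlower
    calc h s ≤ 2 * M * R := hfinal
      _ ≤ 2 * M * sInf {E : ℝ | ∃ f, IsUnitFlow G s t f ∧ E = flowEnergy f} := by
          apply mul_le_mul_of_nonneg_left hlb
          exact mul_nonneg (by norm_num) (by rw [hM]; exact Nat.cast_nonneg _)
end
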